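/- arXiv:2110.14271 — 7 statements merged into one kernel-verified Lean document; each statement's English description precedes it below -/
import Mathlib

section
/- Consider a trading instance with agents N and items M, where each agent i owns a set S_i ⊆ M (the sets S_i partition M) and demands a set D_i ⊆ M with S_i ∩ D_i = ∅, and let l = max_i |D_i|. For every (possibly dynamic) execution r_o there exists a static execution r_s (one in which each item is reallocated at most once) such that every agent who receives at least one item in r_o receives at least one item in r_s. Consequently, the social welfare of an optimal static execution is at least 1/l times the social welfare of an optimal execution. -/
set_option linter.unusedSectionVars false
set_option maxHeartbeats 1000000


structure TState (N M : Type) where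
  own : N → Finset M
  dem : N → Finset M

variable {N M : Type} [DecidableEq N] [DecidableEq M]

/-- In a trading cycle `c = [(i₁,j₁),…,(i_k,j_k)]`, agent `i_t` receives item `j_t`;
`gives c` pairs each agent with the item he gives, namely `j_{t-1}` (cyclically). -/
def gives (c : List (N × M)) : List (N × M) :=
  (c.map Prod.fst).zip ((c.rotate (c.length - 1)).map Prod.snd)

/-- A valid cycle step: nonempty, visits each agent and each item at most once,
every participating agent receives an item he currently demands and gives an item
he currently owns. -/
def ValidCycle (s : TState N M) (c : List (N × M)) : Prop :=
  c ≠ [] ∧ (c.map Prod.fst).Nodup ∧ (c.map Prod.snd).Nodup ∧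
    (∀ p ∈ c, p.2 ∈ s.dem p.1) ∧ (∀ p ∈ gives c, p.2 ∈ s.own p.1)

/-- The state after executing a cycle: every used demand edge is reversed into a
supply edge (the received item moves into the agent's supply and leaves his demand),
and every used supply edge is removed. -/
def stepCycle (s : TState N M) (c : List (N × M)) : TState N M where
  own i := ((s.own i).filter fun j => (i, j) ∉ gives c) ∪
      ((c.filter fun p => decide (p.1 = i)).map Prod.snd).toFinset
  dem i := (s.dem i).filter fun j => (i, j) ∉ c

/-- An execution is a sequence of cycle steps, each valid in the successively
updated state. -/
def ValidExec (s : TState N M) : List (List (N × M)) → Prop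
  | [] => True
  | c :: r => ValidCycle s c ∧ ValidExec (stepCycle s c) r

/-- Total number of exchanges (items received) in an execution. -/
def exchanges (r : List (List (N × M))) : ℕ := (r.map List.length).sum

/-- Number of items agent `i` receives during execution `r`. -/
def receivedCount (r : List (List (N × M))) (i : N) : ℕ :=
  (r.map fun c => c.countP fun p => decide (p.1 = i)).sum

/-- Number of items agent `i` gives during execution `r`. -/
def givenCount (r : List (List (N × M))) (i : N) : ℕ :=
  (r.map fun c => (gives c).countP fun p => decide (p.1 = i)).sum

/-- A static execution allocates each item at most once. -/
def StaticExec (r : List (List (N × M))) : Prop := (r.flatten.map Prod.snd).Nodup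


-- ## auxiliary lemmas


lemma gives_map_fst (c : List (N × M)) : (gives c).map Prod.fst = c.map Prod.fst := by
  apply List.map_fst_zip
  simp

lemma gives_map_snd (c : List (N × M)) :
    (gives c).map Prod.snd = (c.map Prod.snd).rotate (c.length - 1) := by
  unfold gives
  rw [List.map_snd_zip, List.map_rotate]
  simp

lemma gives_snd_perm (c : List (N × M)) : ((gives c).map Prod.snd).Perm (c.map Prod.snd) := by
  rw [gives_map_snd]; exact List.rotate_perm _ _

lemma mem_own_step (s : TState N M) (c : List (N × M)) (i : N) (j : M) :
    j ∈ (stepCycle s c).own i ↔ (j ∈ s.own i ∧ (i, j) ∉ gives c) ∨ (i, j) ∈ c := by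
  simp only [stepCycle, Finset.mem_union, Finset.mem_filter, List.mem_toFinset, List.mem_map,
    List.mem_filter, decide_eq_true_eq]
  constructor
  · rintro (⟨h1, h2⟩ | ⟨p, ⟨hp, hpi⟩, hpj⟩)
    · exact Or.inl ⟨h1, h2⟩
    · right
      have : p = (i, j) := Prod.ext hpi hpj
      rwa [this] at hp
  · rintro (⟨h1, h2⟩ | h)
    · exact Or.inl ⟨h1, h2⟩
    · exact Or.inr ⟨(i, j), ⟨h, rfl⟩, rfl⟩

lemma mem_dem_step (s : TState N M) (c : List (N × M)) (i : N) (j : M) :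
    j ∈ (stepCycle s c).dem i ↔ j ∈ s.dem i ∧ (i, j) ∉ c := by
  simp [stepCycle]

lemma pair_eq_of_fst {c : List (N × M)} (hfst : (c.map Prod.fst).Nodup) {p q : N × M}
    (hp : p ∈ c) (hq : q ∈ c) (h : p.1 = q.1) : p = q :=
  List.inj_on_of_nodup_map hfst hp hq h

lemma exists_unique_pair {c : List (N × M)} (hfst : (c.map Prod.fst).Nodup) {i : N}
    (hi : i ∈ c.map Prod.fst) : ∃ r, (i, r) ∈ c ∧ ∀ j, (i, j) ∈ c → j = r := by
  obtain ⟨p, hp, rfl⟩ := List.mem_map.1 hi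
  refine ⟨p.2, hp, fun j hj => ?_⟩
  have := pair_eq_of_fst hfst hj hp rfl
  exact (Prod.mk.injEq .. ▸ this).2

-- ## invariants
def TInv (S D : N → Finset M) (s : TState N M) : Prop :=
  (∀ j : M, ∃! i : N, j ∈ s.own i) ∧
  (∀ i, s.dem i ⊆ D i) ∧
  (∀ i, s.own i ⊆ S i ∪ (D i \ s.dem i)) ∧
  (∀ i, (s.own i).card = (S i).card) ∧
  (∀ i, s.dem i ≠ D i → ∃ j ∈ s.own i, j ∉ S i)

lemma inv_disj {S D : N → Finset M} {s : TState N M} (hdisj : ∀ i : N, S i ∩ D i = ∅)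
    (hI : TInv S D s) {i : N} {j : M} (ho : j ∈ s.own i) (hd : j ∈ s.dem i) : False := by
  obtain ⟨-, h2, h3, -, -⟩ := hI
  rcases Finset.mem_union.1 (h3 i ho) with h | h
  · have : j ∈ S i ∩ D i := Finset.mem_inter.2 ⟨h, h2 i hd⟩
    simp [hdisj i] at this
  · exact (Finset.mem_sdiff.1 h).2 hd

lemma inv_step {S D : N → Finset M} {s : TState N M} {c : List (N × M)}
    (hdisj : ∀ i : N, S i ∩ D i = ∅) (hI : TInv S D s) (hc : ValidCycle s c) :
    TInv S D (stepCycle s c) := by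
  obtain ⟨hne, hfst, hsnd, hdem, hgive⟩ := hc
  obtain ⟨h1, h2, h3, h4, h5⟩ := hI
  have hgfst : (gives c).map Prod.fst = c.map Prod.fst := gives_map_fst c
  have hgsnd := gives_snd_perm c
  have hgfnd : ((gives c).map Prod.fst).Nodup := by rwa [hgfst]
  -- characterize own'/dem' for participants
  have key : ∀ i ∈ c.map Prod.fst, ∃ r g, (i, r) ∈ c ∧ (∀ j, (i, j) ∈ c → j = r) ∧
      (i, g) ∈ gives c ∧ (∀ j, (i, j) ∈ gives c → j = g) := by
    intro i hi
    obtain ⟨r, hr, hru⟩ := exists_unique_pair hfst hi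
    obtain ⟨g, hg, hgu⟩ := exists_unique_pair hgfnd (by rwa [hgfst])
    exact ⟨r, g, hr, hru, hg, hgu⟩
  have hown_eq : ∀ i, i ∉ c.map Prod.fst → (stepCycle s c).own i = s.own i := by
    intro i hi
    ext j
    rw [mem_own_step]
    constructor
    · rintro (⟨h, -⟩ | h)
      · exact h
      · exact absurd (List.mem_map_of_mem (f := Prod.fst) h) hi
    · intro h
      refine Or.inl ⟨h, fun hg => ?_⟩
      exact hi (hgfst ▸ List.mem_map_of_mem (f := Prod.fst) hg)
  have hdem_eq : ∀ i, i ∉ c.map Prod.fst → (stepCycle s c).dem i = s.dem i := by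
    intro i hi
    ext j
    rw [mem_dem_step]
    exact ⟨fun h => h.1, fun h => ⟨h, fun hm => hi (List.mem_map_of_mem (f := Prod.fst) hm)⟩⟩
  have hown_part : ∀ i r g, (i, r) ∈ c → (∀ j, (i, j) ∈ c → j = r) →
      (i, g) ∈ gives c → (∀ j, (i, j) ∈ gives c → j = g) →
      (stepCycle s c).own i = insert r ((s.own i).erase g) := by
    intro i r g hr hru hg hgu
    ext j
    rw [mem_own_step, Finset.mem_insert, Finset.mem_erase]
    constructor
    · rintro (⟨h, hng⟩ | h)
      · exact Or.inr ⟨fun hjg => hng (hjg ▸ hg), h⟩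
      · exact Or.inl (hru j h)
    · rintro (rfl | ⟨hjg, hj⟩)
      · exact Or.inr hr
      · exact Or.inl ⟨hj, fun hm => hjg (hgu j hm)⟩
  constructor
  · -- unique ownership
    intro j
    by_cases hj : j ∈ c.map Prod.snd
    · obtain ⟨p, hp, hpj⟩ := List.mem_map.1 hj
      have hj' : j ∈ (gives c).map Prod.snd := hgsnd.mem_iff.2 hj
      obtain ⟨q, hq, hqj⟩ := List.mem_map.1 hj'
      have hqo : j ∈ s.own q.1 := hqj ▸ hgive q hq
      refine ⟨p.1, (mem_own_step ..).2 (Or.inr (by rwa [← hpj, Prod.mk.eta])), fun i hi => ?_⟩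
      rcases (mem_own_step ..).1 hi with ⟨ho, hng⟩ | hm
      · exfalso
        have : i = q.1 := by
          obtain ⟨o, -, hou⟩ := h1 j
          rw [hou i ho, hou q.1 hqo]
        exact hng (this ▸ (by rwa [← hqj, Prod.mk.eta] : (q.1, j) ∈ gives c))
      · have := List.inj_on_of_nodup_map hsnd hm hp (by simp [hpj])
        rw [← this]
    · have hj2 : ∀ i, (i, j) ∉ c := fun i hm => hj (by
        simpa using List.mem_map_of_mem (f := Prod.snd) hm)
      have hj3 : ∀ i, (i, j) ∉ gives c := fun i hm => hj (by
        have := List.mem_map_of_mem (f := Prod.snd) hm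
        exact hgsnd.mem_iff.1 (by simpa using this))
      obtain ⟨o, ho, hou⟩ := h1 j
      refine ⟨o, (mem_own_step ..).2 (Or.inl ⟨ho, hj3 o⟩), fun i hi => ?_⟩
      rcases (mem_own_step ..).1 hi with ⟨h, -⟩ | hm
      · exact hou i h
      · exact absurd hm (hj2 i)
  refine ⟨fun i => (Finset.filter_subset _ _).trans (h2 i), ?_, ?_, ?_⟩
  · -- own ⊆ S ∪ (D \ dem)
    intro i j hj
    rcases (mem_own_step ..).1 hj with ⟨h, -⟩ | hm
    · rcases Finset.mem_union.1 (h3 i h) with hS | hD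
      · exact Finset.mem_union_left _ hS
      · refine Finset.mem_union_right _ (Finset.mem_sdiff.2 ⟨(Finset.mem_sdiff.1 hD).1, ?_⟩)
        intro hd
        exact (Finset.mem_sdiff.1 hD).2 ((Finset.mem_filter.1 hd).1)
    · have hd : j ∈ s.dem i := hdem _ hm
      refine Finset.mem_union_right _ (Finset.mem_sdiff.2 ⟨h2 i hd, ?_⟩)
      intro hd'
      exact ((mem_dem_step ..).1 hd').2 hm
  · -- card own preserved
    intro i
    by_cases hi : i ∈ c.map Prod.fst
    · obtain ⟨r, g, hr, hru, hg, hgu⟩ := key i hi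
      rw [hown_part i r g hr hru hg hgu]
      have hgo : g ∈ s.own i := hgive _ hg
      have hro : r ∉ (s.own i).erase g := by
        intro h
        exact inv_disj hdisj ⟨h1, h2, h3, h4, h5⟩ (Finset.mem_of_mem_erase h) (hdem _ hr)
      rw [Finset.card_insert_of_notMem hro, Finset.card_erase_of_mem hgo, ← h4 i]
      have : 0 < (s.own i).card := Finset.card_pos.2 ⟨g, hgo⟩
      omega
    · rw [hown_eq i hi]; exact h4 i
  · -- non-original witness
    intro i hne'
    by_cases hi : i ∈ c.map Prod.fst
    · obtain ⟨r, g, hr, hru, hg, hgu⟩ := key i hi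
      refine ⟨r, (mem_own_step ..).2 (Or.inr hr), fun hrS => ?_⟩
      have : r ∈ S i ∩ D i := Finset.mem_inter.2 ⟨hrS, h2 i (hdem _ hr)⟩
      simp [hdisj i] at this
    · rw [hdem_eq i hi] at hne'
      obtain ⟨j, hj, hjS⟩ := h5 i hne'
      exact ⟨j, by rw [hown_eq i hi]; exact hj, hjS⟩

-- ## counting lemmas
lemma card_dem_step {s : TState N M} {c : List (N × M)} (hc : ValidCycle s c) (i : N) :
    ((stepCycle s c).dem i).card + c.countP (fun p => decide (p.1 = i)) = (s.dem i).card := by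
  obtain ⟨-, -, hsnd, hdem, -⟩ := hc
  set R : Finset M := ((c.filter fun p => decide (p.1 = i)).map Prod.snd).toFinset with hR
  have hsubl : ((c.filter fun p => decide (p.1 = i)).map Prod.snd).Sublist (c.map Prod.snd) :=
    (List.filter_sublist (l := c)).map Prod.snd
  have hnd : ((c.filter fun p => decide (p.1 = i)).map Prod.snd).Nodup := hsubl.nodup hsnd
  have hmemR : ∀ j, j ∈ R ↔ (i, j) ∈ c := by
    intro j
    simp only [hR, List.mem_toFinset, List.mem_map, List.mem_filter, decide_eq_true_eq]
    constructor
    · rintro ⟨p, ⟨hp, hpi⟩, hpj⟩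
      rwa [(Prod.ext hpi hpj : p = (i, j))] at hp
    · intro h
      exact ⟨(i, j), ⟨h, rfl⟩, rfl⟩
  have hRsub : R ⊆ s.dem i := by
    intro j hj
    exact hdem _ ((hmemR j).1 hj)
  have hcardR : R.card = c.countP (fun p => decide (p.1 = i)) := by
    rw [hR, List.toFinset_card_of_nodup hnd, List.length_map, ← List.countP_eq_length_filter]
  have heq : (stepCycle s c).dem i = s.dem i \ R := by
    ext j
    rw [mem_dem_step, Finset.mem_sdiff, hmemR]
  rw [heq, ← hcardR, Finset.card_sdiff_add_card_eq_card hRsub]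

def finalState (s : TState N M) : List (List (N × M)) → TState N M
  | [] => s
  | c :: r => finalState (stepCycle s c) r

lemma exec_inv {S D : N → Finset M} (hdisj : ∀ i : N, S i ∩ D i = ∅) :
    ∀ (ro : List (List (N × M))) (s : TState N M), ValidExec s ro → TInv S D s →
      TInv S D (finalState s ro) ∧
      ∀ i, receivedCount ro i + ((finalState s ro).dem i).card = (s.dem i).card := by
  intro ro
  induction ro with
  | nil => intro s _ hI; exact ⟨hI, fun i => by simp [receivedCount, finalState]⟩
  | cons c r ih =>
    intro s hv hI
    obtain ⟨hc, hr⟩ := hv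
    obtain ⟨h1, h2⟩ := ih (stepCycle s c) hr (inv_step hdisj hI hc)
    refine ⟨h1, fun i => ?_⟩
    have h3 := card_dem_step hc i
    have h4 := h2 i
    have h5 : receivedCount (c :: r) i =
        c.countP (fun p => decide (p.1 = i)) + receivedCount r i := by
      simp [receivedCount]
    rw [show finalState s (c :: r) = finalState (stepCycle s c) r from rfl]
    omega

lemma length_eq_sum_countP [Fintype N] (l : List (N × M)) :
    l.length = ∑ i : N, l.countP (fun p => decide (p.1 = i)) := by
  induction l with
  | nil => simp
  | cons p l ih =>
    simp only [List.countP_cons, List.length_cons, ih, Finset.sum_add_distrib]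
    have : ∑ i : N, (if (decide (p.1 = i)) = true then 1 else 0) = 1 := by
      have h0 : ∀ i ∈ Finset.univ, (if (decide (p.1 = i)) = true then 1 else 0) =
          (if i = p.1 then (1:ℕ) else 0) := fun i _ => by simp [eq_comm]
      rw [Finset.sum_congr rfl h0, Finset.sum_ite_eq' (Finset.univ) p.1 (fun _ => 1)]
      simp
    omega

lemma exchanges_eq_sum [Fintype N] (r : List (List (N × M))) :
    exchanges r = ∑ i : N, receivedCount r i := by
  have h1 : exchanges r = r.flatten.length := (List.length_flatten (L := r)).symm
  have h2 : ∀ i, receivedCount r i = r.flatten.countP (fun p => decide (p.1 = i)) := by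
    intro i
    rw [receivedCount, List.countP_flatten]
  rw [h1, length_eq_sum_countP]
  exact Finset.sum_congr rfl fun i _ => (h2 i).symm

lemma receivedCount_pos_of_mem {r : List (List (N × M))} {i : N} {j : M}
    (h : (i, j) ∈ r.flatten) : 0 < receivedCount r i := by
  have : 0 < r.flatten.countP (fun p => decide (p.1 = i)) :=
    List.countP_pos_iff.2 ⟨(i, j), h, by simp⟩
  rwa [receivedCount, ← List.countP_flatten]

-- ## cycle extraction
lemma toFinset_filter_card {l : List M} (h : l.Nodup) (p : M → Prop) [DecidablePred p] :
    (l.toFinset.filter p).card = l.countP (fun x => decide (p x)) := by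
  have e : Finset.filter p l.toFinset = (l.filter (fun x => decide (p x))).toFinset := by
    ext x
    simp [List.mem_filter]
  rw [e, List.toFinset_card_of_nodup (h.filter _), List.countP_eq_length_filter]

lemma exists_simple_cycle (T : Finset M) (hT : T.Nonempty) (w lst : M → N)
    (hbal : ∀ i, (T.filter fun j => w j = i).card = (T.filter fun j => lst j = i).card) :
    ∃ L : List M, L ≠ [] ∧ L.Nodup ∧ (∀ x ∈ L, x ∈ T) ∧ (L.map lst).Nodup ∧
      L.map lst = (L.rotate (L.length - 1)).map w := by
  classical
  obtain ⟨j₀, hj₀⟩ := hT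
  have hgex : ∀ j ∈ T, ∃ x ∈ T, lst x = w j := by
    intro j hj
    have h1 : 0 < (T.filter fun x => w x = w j).card :=
      Finset.card_pos.2 ⟨j, Finset.mem_filter.2 ⟨hj, rfl⟩⟩
    rw [hbal] at h1
    obtain ⟨x, hx⟩ := Finset.card_pos.1 h1
    exact ⟨x, (Finset.mem_filter.1 hx).1, (Finset.mem_filter.1 hx).2⟩
  set g : M → M := fun j => if h : j ∈ T then (hgex j h).choose else j₀ with hg
  have hgT : ∀ j ∈ T, g j ∈ T ∧ lst (g j) = w j := by
    intro j hj
    simp only [hg, dif_pos hj]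
    obtain ⟨h1, h2⟩ := (hgex j hj).choose_spec
    exact ⟨h1, h2⟩
  set seq : ℕ → M := fun t => g^[t] j₀ with hseq
  have hseqT : ∀ t, seq t ∈ T := by
    intro t
    induction t with
    | zero => simpa [hseq] using hj₀
    | succ t ih =>
      have h : seq (t + 1) = g (seq t) := Function.iterate_succ_apply' g t j₀
      rw [h]; exact (hgT _ ih).1
  have hchain : ∀ t, lst (seq (t + 1)) = w (seq t) := by
    intro t
    have h : seq (t + 1) = g (seq t) := Function.iterate_succ_apply' g t j₀
    rw [h]; exact (hgT _ (hseqT t)).2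
  have hrep : ∃ b, ∃ a, a < b ∧ lst (seq a) = lst (seq b) := by
    have hmaps : ∀ t ∈ Finset.range (T.card + 1), seq t ∈ T := fun t _ => hseqT t
    have hlt : T.card < (Finset.range (T.card + 1)).card := by simp
    obtain ⟨t₁, _, t₂, _, hne, heq⟩ :=
      Finset.exists_ne_map_eq_of_card_lt_of_maps_to hlt hmaps
    rcases hne.lt_or_gt with h | h
    · exact ⟨t₂, t₁, h, congrArg lst heq⟩
    · exact ⟨t₁, t₂, h, congrArg lst heq.symm⟩
  set b := Nat.find hrep with hb
  obtain ⟨a, hab, hvab⟩ := Nat.find_spec hrep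
  have hvinj : ∀ s t, s < t → t < b → lst (seq s) = lst (seq t) → False := by
    intro s t hst htb hveq
    exact Nat.find_min hrep htb ⟨s, hst, hveq⟩
  set k := b - a with hk
  have hk0 : 0 < k := by omega
  set L := (List.range k).map (fun t => seq (a + t)) with hL
  have hLlen : L.length = k := by simp [hL]
  have hLmem : ∀ x ∈ L, x ∈ T := by
    intro x hx
    obtain ⟨t, -, rfl⟩ := List.mem_map.1 hx
    exact hseqT _
  have hinj : ∀ t ∈ List.range k, ∀ t' ∈ List.range k,
      lst (seq (a + t)) = lst (seq (a + t')) → t = t' := by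
    intro t ht t' ht' h
    rw [List.mem_range] at ht ht'
    rcases lt_trichotomy t t' with h1 | h1 | h1
    · exact (hvinj (a + t) (a + t') (by omega) (by omega) h).elim
    · exact h1
    · exact (hvinj (a + t') (a + t) (by omega) (by omega) h.symm).elim
  have hLnodup : L.Nodup :=
    List.Nodup.map_on (fun t ht t' ht' h => hinj t ht t' ht' (congrArg lst h))
      List.nodup_range
  have hlstnodup : (L.map lst).Nodup := by
    rw [hL, List.map_map]
    exact List.Nodup.map_on (fun t ht t' ht' h => hinj t ht t' ht' h) List.nodup_range
  refine ⟨L, ?_, hLnodup, hLmem, hlstnodup, ?_⟩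
  · intro h
    rw [h] at hLlen
    simp at hLlen
    omega
  · -- rotation equation
    set lf : ℕ → N := fun t => lst (seq (a + t)) with hlf
    have hLsplit : L = ((List.range (k - 1)).map fun t => seq (a + t)) ++ [seq (a + (k - 1))] := by
      rw [hL]
      have : k = (k - 1) + 1 := by omega
      rw [this, List.range_succ, List.map_append]
      simp
    have hRot : L.rotate (L.length - 1) =
        seq (a + (k - 1)) :: ((List.range (k - 1)).map fun t => seq (a + t)) := by
      rw [hLlen, List.rotate_eq_drop_append_take (by omega : k - 1 ≤ L.length)]
      rw [hLsplit]
      have hlen2 : (((List.range (k - 1)).map fun t => seq (a + t))).length = k - 1 := by simp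
      rw [List.drop_left' hlen2, List.take_left' hlen2]
      simp
    rw [hRot]
    -- LHS : map lst L
    have hLHS : L.map lst = lf 0 :: ((List.range (k - 1)).map fun t => lf (t + 1)) := by
      rw [hL, List.map_map]
      have hk1 : k = (k - 1) + 1 := by omega
      conv_lhs => rw [hk1, List.range_succ_eq_map, List.map_cons, List.map_map]
      rfl
    rw [hLHS, List.map_cons, List.map_map]
    congr 1
    · -- lf 0 = w (seq (a + (k-1)))
      have h1 := hchain (a + (k - 1))
      have h2 : a + (k - 1) + 1 = b := by omega
      rw [h2] at h1
      rw [hlf]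
      simp only []
      rw [show a + 0 = a by omega, hvab, ← h1]
    · -- maps over range (k-1) agree
      apply List.map_congr_left
      intro t ht
      rw [List.mem_range] at ht
      have h1 := hchain (a + t)
      simp only [Function.comp, hlf]
      rw [← h1]
      exact rfl

-- ## gives of a constructed cycle
lemma gives_of_cycle (L : List M) (w lst : M → N)
    (h : L.map lst = (L.rotate (L.length - 1)).map w) :
    gives (L.map fun j => (lst j, j)) = (L.rotate (L.length - 1)).map fun j => (w j, j) := by
  set c : List (N × M) := L.map fun j => (lst j, j) with hc
  have hlen : c.length = L.length := by simp [hc]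
  have hsnd : c.map Prod.snd = L := by
    rw [hc, List.map_map]
    exact List.map_id L
  have hfst : c.map Prod.fst = L.map lst := by simp [hc, List.map_map, Function.comp]
  show gives c = _
  unfold gives
  rw [hlen, List.map_rotate, hsnd, hfst, h]
  have := List.zip_map' (f := w) (g := id) (l := L.rotate (L.length - 1))
  simpa using this

-- ## the static builder
lemma static_build : ∀ (n : ℕ) (s : TState N M) (T : Finset M) (w lst : M → N),
    T.card ≤ n →
    (∀ j ∈ T, j ∈ s.own (w j)) → (∀ j ∈ T, j ∈ s.dem (lst j)) →
    (∀ i, (T.filter fun j => w j = i).card = (T.filter fun j => lst j = i).card) →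
    ∃ rs : List (List (N × M)), ValidExec s rs ∧
      (∀ p ∈ rs.flatten, p.2 ∈ T ∧ p.1 = lst p.2) ∧
      (∀ j ∈ T, (lst j, j) ∈ rs.flatten) ∧
      (rs.flatten.map Prod.snd).Nodup ∧ exchanges rs = T.card := by
  intro n
  induction n with
  | zero =>
    intro s T w lst hn _ _ _
    have hemp : T = ∅ := Finset.card_eq_zero.1 (Nat.le_zero.1 hn)
    subst hemp
    exact ⟨[], trivial, by simp, by simp, by simp, by simp [exchanges]⟩
  | succ n ih =>
    intro s T w lst hn hw hd hbal
    rcases T.eq_empty_or_nonempty with rfl | hT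
    · exact ⟨[], trivial, by simp, by simp, by simp, by simp [exchanges]⟩
    obtain ⟨L, hne, hnodup, hmem, hlstnd, hrot⟩ := exists_simple_cycle T hT w lst hbal
    set c : List (N × M) := L.map fun j => (lst j, j) with hc
    have hg : gives c = (L.rotate (L.length - 1)).map fun j => (w j, j) :=
      gives_of_cycle L w lst hrot
    have hcsnd : c.map Prod.snd = L := by
      rw [hc, List.map_map]
      exact List.map_id L
    have hcfst : c.map Prod.fst = L.map lst := by simp [hc, List.map_map, Function.comp]
    have hgm : ∀ p ∈ gives c, p.2 ∈ L ∧ p.1 = w p.2 := by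
      intro p hp
      rw [hg] at hp
      obtain ⟨j, hj, rfl⟩ := List.mem_map.1 hp
      exact ⟨(List.mem_rotate).1 hj, rfl⟩
    have hcm : ∀ p ∈ c, p.2 ∈ L ∧ p.1 = lst p.2 := by
      intro p hp
      obtain ⟨j, hj, rfl⟩ := List.mem_map.1 hp
      exact ⟨hj, rfl⟩
    have hcyc : ValidCycle s c := by
      refine ⟨by simpa [hc] using hne, ?_, ?_, ?_, ?_⟩
      · rw [hcfst]; exact hlstnd
      · rw [hcsnd]; exact hnodup
      · intro p hp
        obtain ⟨h1, h2⟩ := hcm p hp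
        rw [h2]; exact hd _ (hmem _ h1)
      · intro p hp
        obtain ⟨h1, h2⟩ := hgm p hp
        rw [h2]; exact hw _ (hmem _ h1)
    set T' := T \ L.toFinset with hT'
    have hLT : L.toFinset ⊆ T := fun x hx => hmem x (List.mem_toFinset.1 hx)
    have hLcard : L.toFinset.card = L.length := List.toFinset_card_of_nodup hnodup
    have hLpos : 0 < L.length := List.length_pos_iff.2 hne
    have hT'card : T'.card ≤ n := by
      rw [hT', Finset.card_sdiff_of_subset hLT, hLcard]
      have := Finset.card_le_card hLT
      omega
    have hw' : ∀ j ∈ T', j ∈ (stepCycle s c).own (w j) := by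
      intro j hj
      rw [hT', Finset.mem_sdiff] at hj
      apply (mem_own_step ..).2
      refine Or.inl ⟨hw j hj.1, fun hmem' => ?_⟩
      exact hj.2 (List.mem_toFinset.2 ((hgm _ hmem').1))
    have hd' : ∀ j ∈ T', j ∈ (stepCycle s c).dem (lst j) := by
      intro j hj
      rw [hT', Finset.mem_sdiff] at hj
      apply (mem_dem_step ..).2
      exact ⟨hd j hj.1, fun hmem' => hj.2 (List.mem_toFinset.2 ((hcm _ hmem').1))⟩
    have hbal' : ∀ i, (T'.filter fun j => w j = i).card = (T'.filter fun j => lst j = i).card := by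
      intro i
      have hsplit : ∀ (p : M → Prop) (_ : DecidablePred p),
          (T'.filter p).card = (T.filter p).card - (L.toFinset.filter p).card := by
        intro p _
        have he : T'.filter p = T.filter p \ L.toFinset.filter p := by
          ext x
          simp only [hT', Finset.mem_filter, Finset.mem_sdiff]
          tauto
        rw [he, Finset.card_sdiff_of_subset (Finset.filter_subset_filter p hLT)]
      have hperm : (L.map w).Perm (L.map lst) := by
        rw [hrot]
        exact ((List.rotate_perm L (L.length - 1)).map w).symm
      have hloc : (L.toFinset.filter fun j => w j = i).card =
          (L.toFinset.filter fun j => lst j = i).card := by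
        rw [toFinset_filter_card hnodup, toFinset_filter_card hnodup]
        have h1 : L.countP (fun x => decide (w x = i)) =
            (L.map w).countP (fun x => decide (x = i)) :=
          (List.countP_map (p := fun x => decide (x = i)) (f := w) (l := L)).symm
        have h2 : L.countP (fun x => decide (lst x = i)) =
            (L.map lst).countP (fun x => decide (x = i)) :=
          (List.countP_map (p := fun x => decide (x = i)) (f := lst) (l := L)).symm
        rw [h1, h2, hperm.countP_eq]
      rw [hsplit _ inferInstance, hsplit _ inferInstance, hbal i, hloc]
    obtain ⟨rs', hv', hall', hcov', hnd', hex'⟩ :=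
      ih (stepCycle s c) T' w lst hT'card hw' hd' hbal'
    have hflat : (c :: rs').flatten = c ++ rs'.flatten := rfl
    refine ⟨c :: rs', ⟨hcyc, hv'⟩, ?_, ?_, ?_, ?_⟩
    · intro p hp
      rw [hflat] at hp
      rcases List.mem_append.1 hp with h | h
      · obtain ⟨h1, h2⟩ := hcm p h
        exact ⟨hmem _ h1, h2⟩
      · obtain ⟨h1, h2⟩ := hall' p h
        exact ⟨Finset.sdiff_subset h1, h2⟩
    · intro j hj
      rw [hflat]
      apply List.mem_append.2
      by_cases hjL : j ∈ L
      · exact Or.inl (List.mem_map.2 ⟨j, hjL, rfl⟩)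
      · refine Or.inr (hcov' j ?_)
        rw [hT', Finset.mem_sdiff]
        exact ⟨hj, fun h => hjL (List.mem_toFinset.1 h)⟩
    · rw [hflat, List.map_append, hcsnd]
      apply List.Nodup.append hnodup hnd'
      intro x hx hx'
      obtain ⟨p, hp, rfl⟩ := List.mem_map.1 hx'
      have := (hall' p hp).1
      rw [hT', Finset.mem_sdiff] at this
      exact this.2 (List.mem_toFinset.2 hx)
    · have h1 : exchanges (c :: rs') = c.length + exchanges rs' := by simp [exchanges]
      have h2 : c.length = L.length := by simp [hc]
      have hle : L.length ≤ T.card := hLcard ▸ Finset.card_le_card hLT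
      rw [h1, hex', hT', Finset.card_sdiff_of_subset hLT, hLcard, h2]
      omega

theorem stmt1' {N M : Type} [Fintype N] [Fintype M] [DecidableEq N] [DecidableEq M]
    (S D : N → Finset M) (l : ℕ)
    (hpart : ∀ j : M, ∃! i : N, j ∈ S i)
    (hdisj : ∀ i : N, S i ∩ D i = ∅)
    (hl : ∀ i : N, (D i).card ≤ l)
    (ro : List (List (N × M))) (hro : ValidExec ⟨S, D⟩ ro) :
    ∃ rs : List (List (N × M)), ValidExec ⟨S, D⟩ rs ∧ StaticExec rs ∧
      (∀ i : N, 0 < receivedCount ro i → 0 < receivedCount rs i) ∧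
      exchanges ro ≤ l * exchanges rs := by
  classical
  set s0 : TState N M := ⟨S, D⟩ with hs0
  have hI0 : TInv S D s0 := by
    refine ⟨hpart, fun i => le_refl _, fun i => Finset.subset_union_left, fun i => rfl,
      fun i h => absurd rfl h⟩
  obtain ⟨hIf, hF5⟩ := exec_inv hdisj ro s0 hro hI0
  set sf := finalState s0 ro with hsf
  obtain ⟨h1, h2, h3, h4, h5⟩ := hIf
  -- original owner and final owner
  set w : M → N := fun j => (hpart j).choose with hwdef
  have hwS : ∀ j, j ∈ S (w j) := fun j => (hpart j).choose_spec.1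
  have hwU : ∀ j i, j ∈ S i → i = w j := fun j i h => (hpart j).choose_spec.2 i h
  set lst : M → N := fun j => (h1 j).choose with hldef
  have hlo : ∀ j, j ∈ sf.own (lst j) := fun j => (h1 j).choose_spec.1
  have hlU : ∀ j i, j ∈ sf.own i → i = lst j := fun j i h => (h1 j).choose_spec.2 i h
  set T : Finset M := Finset.univ.filter fun j => j ∉ sf.own (w j) with hTdef
  have hmemT : ∀ j, j ∈ T ↔ j ∉ sf.own (w j) := by
    intro j; simp [hTdef]
  -- membership facts
  have hTw : ∀ j ∈ T, j ∈ s0.own (w j) := fun j _ => hwS j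
  have hkeptT : ∀ i j, j ∈ sf.own i → j ∉ S i → (j ∈ T ∧ lst j = i) := by
    intro i j hj hjS
    have hlj : lst j = i := (hlU j i hj).symm
    have hwne : w j ≠ i := fun h => hjS (h ▸ hwS j)
    refine ⟨(hmemT j).2 fun hjw => ?_, hlj⟩
    exact hwne ((hlU j _ hjw).trans hlj)
  have hTd : ∀ j ∈ T, j ∈ s0.dem (lst j) := by
    intro j hj
    have hj' := (hmemT j).1 hj
    rcases Finset.mem_union.1 (h3 (lst j) (hlo j)) with hS | hD
    · exact absurd ((hwU j _ hS) ▸ hlo j) hj'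
    · exact (Finset.mem_sdiff.1 hD).1
  -- the two fibers
  have hfw : ∀ i, T.filter (fun j => w j = i) = S i \ sf.own i := by
    intro i
    ext j
    simp only [Finset.mem_filter, Finset.mem_sdiff, hmemT j]
    constructor
    · rintro ⟨hjo, rfl⟩
      exact ⟨hwS j, hjo⟩
    · rintro ⟨hjS, hjo⟩
      have := (hwU j i hjS).symm
      subst this
      exact ⟨hjo, rfl⟩
  have hfl : ∀ i, T.filter (fun j => lst j = i) = sf.own i \ S i := by
    intro i
    ext j
    simp only [Finset.mem_filter, Finset.mem_sdiff, hmemT j]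
    constructor
    · rintro ⟨hjo, rfl⟩
      refine ⟨hlo j, fun hjS => ?_⟩
      exact hjo ((hwU j _ hjS) ▸ hlo j)
    · rintro ⟨hjo, hjS⟩
      obtain ⟨hjT, hlj⟩ := hkeptT i j hjo hjS
      exact ⟨(hmemT j).1 hjT, hlj⟩
  have hbal : ∀ i, (T.filter fun j => w j = i).card = (T.filter fun j => lst j = i).card := by
    intro i
    rw [hfw i, hfl i]
    exact Finset.card_sdiff_comm (h4 i).symm
  obtain ⟨rs, hvrs, hall, hcov, hnd, hex⟩ :=
    static_build T.card s0 T w lst (le_refl _) hTw hTd hbal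
  refine ⟨rs, hvrs, hnd, ?_, ?_⟩
  · -- agents served
    intro i hi
    have hne : sf.dem i ≠ D i := by
      intro h
      have := hF5 i
      rw [h] at this
      rw [show s0.dem i = D i from rfl] at this
      omega
    obtain ⟨j, hjo, hjS⟩ := h5 i hne
    obtain ⟨hjT, hlj⟩ := hkeptT i j hjo hjS
    have : (i, j) ∈ rs.flatten := by
      have := hcov j hjT
      rwa [hlj] at this
    exact receivedCount_pos_of_mem this
  · -- welfare
    rw [exchanges_eq_sum ro, hex]
    have hper : ∀ i : N, receivedCount ro i ≤ l * (T.filter fun j => lst j = i).card := by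
      intro i
      rcases Nat.eq_zero_or_pos (receivedCount ro i) with h | h
      · simp [h]
      · have hne : sf.dem i ≠ D i := by
          intro he
          have := hF5 i
          rw [he] at this
          rw [show s0.dem i = D i from rfl] at this
          omega
        obtain ⟨j, hjo, hjS⟩ := h5 i hne
        obtain ⟨hjT, hlj⟩ := hkeptT i j hjo hjS
        have hpos : 0 < (T.filter fun j => lst j = i).card :=
          Finset.card_pos.2 ⟨j, Finset.mem_filter.2 ⟨hjT, hlj⟩⟩
        have hle : receivedCount ro i ≤ l := by
          have h6 := hF5 i
          rw [show s0.dem i = D i from rfl] at h6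
          have h7 := hl i
          omega
        calc receivedCount ro i ≤ l := hle
          _ = l * 1 := (mul_one l).symm
          _ ≤ l * (T.filter fun j => lst j = i).card := Nat.mul_le_mul_left l hpos
    calc ∑ i : N, receivedCount ro i
        ≤ ∑ i : N, l * (T.filter fun j => lst j = i).card :=
          Finset.sum_le_sum fun i _ => hper i
      _ = l * ∑ i : N, (T.filter fun j => lst j = i).card := by rw [Finset.mul_sum]
      _ = l * T.card := by
          rw [← Finset.card_eq_sum_card_fiberwise (f := lst) (t := Finset.univ)
            (fun x _ => Finset.mem_univ (lst x))]

/-- For every (possibly dynamic) execution `ro` there is a static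
execution `rs` in which every agent who received an item in `ro` receives an item;
consequently the optimal static welfare is at least `1/l` of the optimal welfare. -/
theorem stmt1 {N M : Type} [Fintype N] [Fintype M] [DecidableEq N] [DecidableEq M]
    (S D : N → Finset M) (l : ℕ)
    (hpart : ∀ j : M, ∃! i : N, j ∈ S i)
    (hdisj : ∀ i : N, S i ∩ D i = ∅)
    (hl : ∀ i : N, (D i).card ≤ l)
    (ro : List (List (N × M))) (hro : ValidExec ⟨S, D⟩ ro) :
    ∃ rs : List (List (N × M)), ValidExec ⟨S, D⟩ rs ∧ StaticExec rs ∧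
      (∀ i : N, 0 < receivedCount ro i → 0 < receivedCount rs i) ∧
      exchanges ro ≤ l * exchanges rs :=
  stmt1' S D l hpart hdisj hl ro hro
end

section
/- For every l ≥ 1 there exists a trading instance with l+1 agents and l+1 items in which every agent demands at most l items, the optimal (dynamic) execution performs l(l+1) exchanges, and every static execution performs at most l+1 exchanges; hence the ratio between the optimal dynamic welfare and the optimal static welfare equals l. -/
variable {N M : Type} [DecidableEq N] [DecidableEq M]

/-- The instance with `l+1` agents and items, where agent `i` owns item `i` and
demands all other items. -/
def tightInstance (l : ℕ) : TState (Fin (l + 1)) (Fin (l + 1)) :=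
  ⟨fun i => {i}, fun i => Finset.univ.erase i⟩

/-! ### Auxiliary material -/

open Fin.NatCast

def cyc (l m : ℕ) : List (Fin (l+1) × Fin (l+1)) :=
  (List.finRange (l+1)).map (fun i => (i, i + (m : Fin (l+1))))

lemma finRange_rotate (n : ℕ) :
    ((List.finRange (n+1)).rotate n) = (List.finRange (n+1)).map (fun i => i + (n : Fin (n+1))) := by
  apply List.ext_get
  · simp
  · intro t h1 h2
    simp [List.get_rotate, List.getElem_rotate, List.get_finRange, Fin.ext_iff, Fin.add_def,
      Nat.mod_mod_of_dvd]

lemma gives_cyc (l m : ℕ) :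
    gives (cyc l m) = (List.finRange (l+1)).map
      (fun i => (i, i + (l : Fin (l+1)) + (m : Fin (l+1)))) := by
  have hlen : (cyc l m).length = l + 1 := by simp [cyc]
  have h1 : (cyc l m).map Prod.fst = (List.finRange (l+1)).map id := by
    simp only [cyc, List.map_map]
    congr 1
  have h2 : ((cyc l m).rotate ((cyc l m).length - 1)).map Prod.snd
      = (List.finRange (l+1)).map (fun i => i + (l : Fin (l+1)) + (m : Fin (l+1))) := by
    rw [hlen, Nat.add_sub_cancel, cyc, ← List.map_rotate, finRange_rotate, List.map_map,
      List.map_map]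
    simp [Function.comp, add_comm, add_assoc, add_left_comm]
  rw [gives, h1, h2, List.zip_map']
  simp

/-- The state after `k` full rounds. -/
def sK (l k : ℕ) : TState (Fin (l+1)) (Fin (l+1)) :=
  ⟨fun i => {i + (k : Fin (l+1))},
   fun i => Finset.univ.filter (fun j => k < (j - i).val)⟩

lemma sK_zero (l : ℕ) : sK l 0 = tightInstance l := by
  unfold sK tightInstance
  congr 1
  · funext i; simp
  · funext i
    ext j
    simp only [Finset.mem_filter, Finset.mem_univ, true_and, Finset.mem_erase, and_true,
      Nat.cast_zero]
    rw [Nat.pos_iff_ne_zero]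
    simp only [ne_eq, ← sub_eq_zero (a := j) (b := i), Fin.ext_iff, Fin.val_zero]

lemma cast_lk (l k : ℕ) :
    ((l : Fin (l+1)) + ((k+1 : ℕ) : Fin (l+1))) = (k : Fin (l+1)) := by
  have h : ((l + (k+1) : ℕ) : Fin (l+1)) = (l : Fin (l+1)) + ((k+1:ℕ) : Fin (l+1)) := by
    push_cast; ring
  rw [← h, show l + (k+1) = (l+1) + k by ring, Nat.cast_add, Fin.natCast_self, zero_add]

lemma mem_cyc (l m : ℕ) (p : Fin (l+1) × Fin (l+1)) :
    p ∈ cyc l m ↔ p.2 = p.1 + (m : Fin (l+1)) := by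
  simp only [cyc, List.mem_map, List.mem_finRange, true_and]
  constructor
  · rintro ⟨i, rfl⟩; rfl
  · intro h; exact ⟨p.1, by rw [← h]⟩

lemma mem_gives_cyc (l m : ℕ) (p : Fin (l+1) × Fin (l+1)) :
    p ∈ gives (cyc l m) ↔ p.2 = p.1 + (l : Fin (l+1)) + (m : Fin (l+1)) := by
  rw [gives_cyc]
  simp only [List.mem_map, List.mem_finRange, true_and]
  constructor
  · rintro ⟨i, rfl⟩; rfl
  · intro h; exact ⟨p.1, by rw [← h]⟩

lemma valid_cyc (l k : ℕ) (hk : k < l) : ValidCycle (sK l k) (cyc l (k+1)) := by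
  refine ⟨by simp [cyc], ?_, ?_, ?_, ?_⟩
  · have h1 : (cyc l (k+1)).map Prod.fst = (List.finRange (l+1)).map id := by
      simp only [cyc, List.map_map]; congr 1
    rw [h1]; simp [List.nodup_finRange]
  · have h2 : (cyc l (k+1)).map Prod.snd
        = (List.finRange (l+1)).map (fun i => i + ((k+1:ℕ) : Fin (l+1))) := by
      simp only [cyc, List.map_map]; congr 1
    rw [h2]
    exact (List.nodup_finRange _).map (fun a b => by simp)
  · intro p hp
    rw [mem_cyc] at hp
    simp only [sK, Finset.mem_filter, Finset.mem_univ, true_and, hp, add_sub_cancel_left]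
    rw [Fin.val_cast_of_lt (n := l+1) (by omega)]
    omega
  · intro p hp
    rw [mem_gives_cyc] at hp
    simp only [sK, Finset.mem_singleton, hp]
    rw [add_assoc, cast_lk]

lemma step_cyc (l k : ℕ) (hk : k < l) :
    stepCycle (sK l k) (cyc l (k+1)) = sK l (k+1) := by
  unfold stepCycle sK
  congr 1
  · funext i
    ext j
    simp only [Finset.mem_union, Finset.mem_filter, Finset.mem_singleton,
      List.mem_toFinset, List.mem_map, List.mem_filter, decide_eq_true_eq]
    constructor
    · rintro (⟨rfl, hn⟩ | ⟨p, ⟨hp, rfl⟩, rfl⟩)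
      · refine absurd ((mem_gives_cyc l (k+1) (i, i + (k : Fin (l+1)))).mpr ?_) hn
        show i + (k : Fin (l+1)) = i + (l : Fin (l+1)) + ((k+1 : ℕ) : Fin (l+1))
        rw [add_assoc, cast_lk]
      · exact ((mem_cyc l (k+1) p).mp hp)
    · intro hj
      right
      exact ⟨(i, j), ⟨(mem_cyc l (k+1) (i, j)).mpr hj, rfl⟩, rfl⟩
  · funext i
    rw [Finset.filter_filter]
    apply Finset.filter_congr
    intro j _
    have hmem : ((i, j) ∈ cyc l (k+1)) ↔ (j - i).val = k + 1 := by
      rw [mem_cyc]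
      constructor
      · intro h
        have h' : j = i + ((k+1:ℕ) : Fin (l+1)) := h
        rw [h', add_sub_cancel_left, Fin.val_cast_of_lt (n := l+1) (by omega)]
      · intro h
        have hji : j - i = ((k+1 : ℕ) : Fin (l+1)) := by
          rw [Fin.ext_iff, h, Fin.val_cast_of_lt (n := l+1) (by omega)]
        show j = i + ((k+1:ℕ) : Fin (l+1))
        rw [← sub_add_cancel j i, hji]
        exact add_comm _ _
    simp only [hmem, decide_eq_true_eq]
    constructor
    · rintro ⟨h1, h2⟩; omega
    · intro h; exact ⟨by omega, by omega⟩

/-- The execution: rounds `k+1, …, k+n`. -/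
def execList (l k : ℕ) : ℕ → List (List (Fin (l+1) × Fin (l+1)))
  | 0 => []
  | n + 1 => cyc l (k+1) :: execList l (k+1) n

lemma valid_execList (l : ℕ) : ∀ n k, k + n ≤ l → ValidExec (sK l k) (execList l k n) := by
  intro n
  induction n with
  | zero => intro k _; trivial
  | succ n ih =>
    intro k hk
    refine ⟨valid_cyc l k (by omega), ?_⟩
    rw [step_cyc l k (by omega)]
    exact ih (k+1) (by omega)

lemma exchanges_execList (l : ℕ) : ∀ n k, exchanges (execList l k n) = n * (l + 1) := by
  intro n
  induction n with
  | zero => intro k; simp [execList, exchanges]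
  | succ n ih =>
    intro k
    simp only [execList, exchanges, List.map_cons, List.sum_cons]
    have := ih (k+1)
    simp only [exchanges] at this
    rw [this]
    simp [cyc]
    ring

/-! Upper bound lemmas -/

lemma countP_le_one_of_nodup {α : Type} [DecidableEq α] (i : α) :
    ∀ L : List α, L.Nodup → L.countP (fun a => decide (a = i)) ≤ 1 := by
  intro L
  induction L with
  | nil => intro _; simp
  | cons a L ih =>
    intro h
    rw [List.countP_cons]
    rcases List.nodup_cons.mp h with ⟨ha, hL⟩
    by_cases hai : a = i
    · subst hai
      have hz : L.countP (fun x => decide (x = a)) = 0 := by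
        rw [List.countP_eq_zero]
        intro x hx
        simp only [decide_eq_true_eq]
        rintro rfl
        exact ha hx
      simp [hz]
    · simpa [hai] using ih hL

lemma received_le_dem (i : N) :
    ∀ (r : List (List (N × M))) (s : TState N M), ValidExec s r →
      receivedCount r i ≤ (s.dem i).card := by
  intro r
  induction r with
  | nil => intro s _; simp [receivedCount]
  | cons c r ih =>
    intro s hv
    obtain ⟨hc, hr⟩ := hv
    have hstep := ih (stepCycle s c) hr
    have hrc : receivedCount (c :: r) i
        = c.countP (fun p => decide (p.1 = i)) + receivedCount r i := by
      simp [receivedCount]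
    rw [hrc]
    have hcount : c.countP (fun p => decide (p.1 = i)) ≤ 1 := by
      have hnd := hc.2.1
      have h1 : c.countP (fun p => decide (p.1 = i))
          = (c.map Prod.fst).countP (fun a => decide (a = i)) := by
        rw [List.countP_map]; rfl
      have h2 := countP_le_one_of_nodup i (c.map Prod.fst) hnd
      omega
    have hdem : ((stepCycle s c).dem i).card
        + c.countP (fun p => decide (p.1 = i)) ≤ (s.dem i).card := by
      rcases Nat.eq_zero_or_pos (c.countP (fun p => decide (p.1 = i))) with h0 | h1
      · rw [h0]
        simp only [stepCycle, Nat.add_zero]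
        exact Finset.card_filter_le _ _
      · have hone : c.countP (fun p => decide (p.1 = i)) = 1 := by omega
        rw [hone]
        obtain ⟨p, hp, hpi⟩ : ∃ p ∈ c, p.1 = i := by
          by_contra h
          push_neg at h
          have : c.countP (fun p => decide (p.1 = i)) = 0 := by
            rw [List.countP_eq_zero]
            intro p hp
            simpa using h p hp
          omega
        have hj : p.2 ∈ s.dem i := hpi ▸ hc.2.2.2.1 p hp
        have hsub : (stepCycle s c).dem i ⊆ (s.dem i).erase p.2 := by
          intro x hx
          simp only [stepCycle, Finset.mem_filter, decide_eq_true_eq] at hx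
          refine Finset.mem_erase.mpr ⟨?_, hx.1⟩
          rintro rfl
          exact hx.2 (by rw [← hpi]; exact hp)
        calc ((stepCycle s c).dem i).card + 1
            ≤ ((s.dem i).erase p.2).card + 1 := by
              exact Nat.add_le_add_right (Finset.card_le_card hsub) 1
          _ = (s.dem i).card := by
              rw [Finset.card_erase_of_mem hj]
              have : 1 ≤ (s.dem i).card := Finset.card_pos.mpr ⟨p.2, hj⟩
              omega
    omega

lemma exchanges_eq_sum_received {n : ℕ} (r : List (List (Fin n × M))) :
    exchanges r = ∑ i : Fin n, receivedCount r i := by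
  induction r with
  | nil => simp [exchanges, receivedCount]
  | cons c r ih =>
    have hrc : ∀ i, receivedCount (c :: r) i
        = c.countP (fun p => decide (p.1 = i)) + receivedCount r i := by
      intro i; simp [receivedCount]
    simp only [exchanges, List.map_cons, List.sum_cons]
    rw [show (List.map List.length r).sum = exchanges r from rfl, ih]
    simp only [hrc, Finset.sum_add_distrib]
    congr 1
    clear hrc ih
    induction c with
    | nil => simp
    | cons p c ihc =>
      simp only [List.length_cons, List.countP_cons]
      rw [Finset.sum_add_distrib, ← ihc]
      have hsum : ∑ i : Fin n, (if (decide (p.1 = i)) = true then 1 else 0) = 1 := by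
        simp
      omega

/-- In this instance every agent demands at most `l` items, the
optimal (dynamic) execution performs `l(l+1)` exchanges, and every static execution
performs at most `l+1` exchanges: the dynamic/static gap is exactly `l`. -/
theorem stmt2 (l : ℕ) (hl : 1 ≤ l) :
    (∀ i : Fin (l + 1), ((tightInstance l).dem i).card ≤ l) ∧
    (∃ r : List (List (Fin (l + 1) × Fin (l + 1))),
        ValidExec (tightInstance l) r ∧ exchanges r = l * (l + 1)) ∧
    (∀ r : List (List (Fin (l + 1) × Fin (l + 1))),
        ValidExec (tightInstance l) r → exchanges r ≤ l * (l + 1)) ∧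
    (∀ r : List (List (Fin (l + 1) × Fin (l + 1))),
        ValidExec (tightInstance l) r → StaticExec r → exchanges r ≤ l + 1) := by
  refine ⟨?_, ?_, ?_, ?_⟩
  · intro i
    simp [tightInstance, Finset.card_erase_of_mem]
  · refine ⟨execList l 0 l, ?_, ?_⟩
    · have := valid_execList l l 0 (by omega)
      rwa [sK_zero] at this
    · rw [exchanges_execList]
  · intro r hr
    rw [exchanges_eq_sum_received]
    calc ∑ i : Fin (l+1), receivedCount r i
        ≤ ∑ i : Fin (l+1), ((tightInstance l).dem i).card :=
          Finset.sum_le_sum fun i _ => received_le_dem i r _ hr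
      _ = ∑ _i : Fin (l+1), l := by
          apply Finset.sum_congr rfl
          intro i _
          simp [tightInstance, Finset.card_erase_of_mem]
      _ = l * (l+1) := by simp [mul_comm]
  · intro r _ hs
    have h1 : exchanges r = (r.flatten.map Prod.snd).length := by
      rw [exchanges, List.length_map, List.length_flatten]
    rw [h1]
    have := hs.length_le_card
    simpa using this
end

section
/- Let M be a perfect matching of the bipartite graph H(G) built from a directed graph G = (V,E), and let E_c = {e ∈ E : (e,0) is matched in M to (e',1) for some e' ≠ e}. Then in the subgraph (V, E_c) every vertex has equal in-degree and out-degree; consequently E_c decomposes into edge-disjoint directed cycles, yielding a cycle cover using exactly |E_c| edges, where |E_c| equals the weight of M. -/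
variable {V : Type} [Fintype V] [DecidableEq V]

/-- The edges of a directed graph `G` (no parallel edges). -/
abbrev DEdge (G : V → V → Prop) := {p : V × V // G p.1 p.2}

/-- Two edges are consecutive if the head of the first is the tail of the second. -/
def Consec {G : V → V → Prop} (e f : DEdge G) : Prop := e.val.2 = f.val.1

/-- A perfect matching of the bipartite edge-graph `H(G)` on `E × {0,1}`, encoded by
the bijection `m` sending each `(e,0)` to its partner `(m e, 1)`: every edge is
matched either to its own copy (a weight-0 edge of `H(G)`) or to a consecutive edge
(a weight-1 edge of `H(G)`). -/
def IsPMofH {G : V → V → Prop} (m : DEdge G ≃ DEdge G) : Prop :=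
  ∀ e : DEdge G, m e = e ∨ Consec e (m e)

/-- The weight of a perfect matching of `H(G)`: the number of edges not matched to
their own copy. -/
noncomputable def pmWeight {G : V → V → Prop} (m : DEdge G ≃ DEdge G) : ℕ :=
  Set.ncard {e : DEdge G | m e ≠ e}

/-- A closed directed trail (cycle) in `G`: a nonempty duplicate-free list of edges,
consecutively linked, cyclically. -/
def IsClosedTrail {G : V → V → Prop} (c : List (DEdge G)) : Prop :=
  c ≠ [] ∧ c.Nodup ∧ List.Chain' Consec c ∧
    ∀ h : c ≠ [], Consec (c.getLast h) (c.head h)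

/-- A collection of edge-disjoint directed cycles in `G`. -/
def IsCycleCollection {G : V → V → Prop} (cs : List (List (DEdge G))) : Prop :=
  (∀ c ∈ cs, IsClosedTrail c) ∧ cs.flatten.Nodup

open Function in
lemma decomp_aux {V : Type} [Fintype V] [DecidableEq V] (G : V → V → Prop)
    (m : DEdge G ≃ DEdge G) (hm : IsPMofH m) (S : Finset (DEdge G))
    (hcl : ∀ e ∈ S, m e ∈ S) (hne : ∀ e ∈ S, m e ≠ e) :
    ∃ cs : List (List (DEdge G)), (∀ c ∈ cs, IsClosedTrail c) ∧ cs.flatten.Nodup ∧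
      ∀ e : DEdge G, e ∈ cs.flatten ↔ e ∈ S := by
  classical
  induction S using Finset.strongInduction with
  | _ S IH =>
  rcases S.eq_empty_or_nonempty with rfl | ⟨e, he⟩
  · exact ⟨[], by simp, by simp, by simp⟩
  · have hconsec : ∀ x : DEdge G, m x ≠ x → Consec x (m x) :=
      fun x h => (hm x).resolve_left h
    have hper : e ∈ periodicPts m := by
      refine ⟨orderOf m, orderOf_pos m, ?_⟩
      show m^[orderOf m] e = e
      rw [Equiv.Perm.iterate_eq_pow, pow_orderOf_eq_one]; rfl
    set n := minimalPeriod m e with hn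
    have hnpos : 0 < n := minimalPeriod_pos_of_mem_periodicPts hper
    have hiter : m^[n] e = e := iterate_minimalPeriod
    set g : ℕ → DEdge G := fun i => m^[i] e with hg
    have hgS : ∀ i, g i ∈ S := by
      intro i
      induction i with
      | zero => exact he
      | succ i ih =>
        have h := hcl _ ih
        show m^[i + 1] e ∈ S
        rw [Function.iterate_succ_apply']
        exact h
    set L : List (DEdge G) := (List.range n).map g with hL
    have hLne : L ≠ [] := by
      simp [hL, List.range_eq_nil]; omega
    have hLnodup : L.Nodup := by
      refine List.Nodup.map_on ?_ List.nodup_range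
      intro x hx y hy hxy
      exact iterate_injOn_Iio_minimalPeriod (List.mem_range.1 hx) (List.mem_range.1 hy) hxy
    have hgsucc : ∀ i, g (i + 1) = m (g i) := fun i =>
      Function.iterate_succ_apply' _ _ _
    have hstep : ∀ i, Consec (g i) (g (i + 1)) := by
      intro i
      rw [hgsucc]
      exact hconsec _ (hne _ (hgS i))
    have hchain : List.Chain' Consec L := by
      rw [List.Chain', List.isChain_iff_getElem]
      intro i hi
      simp only [hL, List.length_map, List.length_range] at hi
      simp only [hL, List.get_eq_getElem, List.getElem_map, List.getElem_range]
      exact hstep i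
    have hlast : ∀ h : L ≠ [], Consec (L.getLast h) (L.head h) := by
      intro h
      have h1 : L.getLast h = g (n - 1) := by
        rw [List.getLast_eq_getElem]
        simp [hL]
      have h2 : L.head h = g 0 := by
        rw [List.head_eq_getElem]
        simp [hL, hnpos]
      rw [h1, h2]
      have : g ((n - 1) + 1) = g 0 := by
        have hh : (n - 1) + 1 = n := by omega
        rw [hh]; exact hiter
      have hc := hstep (n - 1)
      rwa [this] at hc
    have hLtrail : IsClosedTrail L := ⟨hLne, hLnodup, hchain, hlast⟩
    have hmemL : ∀ x, x ∈ L ↔ ∃ i < n, g i = x := by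
      intro x; simp [hL, eq_comm]
    have hLS : ∀ x ∈ L, x ∈ S := by
      intro x hx; rcases (hmemL x).1 hx with ⟨i, _, rfl⟩; exact hgS i
    -- closure back: if m x ∈ L and x ∈ S then x ∈ L
    have hback : ∀ x, m x ∈ L → x ∈ L := by
      intro x hx
      rcases (hmemL _).1 hx with ⟨i, hi, hix⟩
      rcases Nat.eq_zero_or_pos i with rfl | hipos
      · have : m x = m (g (n - 1)) := by
          rw [← hgsucc]
          have hh : (n - 1) + 1 = n := by omega
          rw [hh]
          show m x = m^[n] e
          rw [hiter]
          exact hix.symm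
        have := m.injective this
        exact (hmemL x).2 ⟨n - 1, by omega, this.symm⟩
      · have : m x = m (g (i - 1)) := by
          rw [← hgsucc]
          have : (i - 1) + 1 = i := by omega
          rw [this]; exact hix.symm
        have := m.injective this
        exact (hmemL x).2 ⟨i - 1, by omega, this.symm⟩
    set S' : Finset (DEdge G) := S \ L.toFinset with hS'
    have hS'cl : ∀ x ∈ S', m x ∈ S' := by
      intro x hx
      simp only [hS', Finset.mem_sdiff, List.mem_toFinset] at hx ⊢
      exact ⟨hcl _ hx.1, fun h => hx.2 (hback x h)⟩
    have hS'sub : S' ⊂ S := by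
      refine Finset.ssubset_iff_of_subset (Finset.sdiff_subset) |>.2 ⟨e, he, ?_⟩
      simp only [hS', Finset.mem_sdiff, List.mem_toFinset, not_and, not_not]
      intro _
      exact (hmemL e).2 ⟨0, hnpos, rfl⟩
    obtain ⟨cs', hcs'1, hcs'2, hcs'3⟩ := IH S' hS'sub hS'cl (fun x hx => hne x (Finset.mem_sdiff.1 hx).1)
    refine ⟨L :: cs', ?_, ?_, ?_⟩
    · intro c hc
      rcases List.mem_cons.1 hc with rfl | hc
      · exact hLtrail
      · exact hcs'1 c hc
    · simp only [List.flatten_cons]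
      rw [List.nodup_append]
      refine ⟨hLnodup, hcs'2, ?_⟩
      intro x hxL y hxf hxy; subst hxy
      have := (hcs'3 x).1 hxf
      simp only [hS', Finset.mem_sdiff, List.mem_toFinset] at this
      exact this.2 hxL
    · intro x
      simp only [List.flatten_cons, List.mem_append, hcs'3, hS', Finset.mem_sdiff,
        List.mem_toFinset]
      constructor
      · rintro (h | h)
        · exact hLS x h
        · exact h.1
      · intro hx
        by_cases hxL : x ∈ L
        · exact Or.inl hxL
        · exact Or.inr ⟨hx, hxL⟩

/-- For a perfect matching `m` of `H(G)` let
`E_c = {e | m e ≠ e}` be the edges not matched to their own copy. Then in the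
subgraph with edge set `E_c` every vertex has equal in-degree and out-degree, and
consequently `E_c` decomposes into edge-disjoint directed cycles: a cycle cover
using exactly `|E_c|` edges, where `|E_c|` is the weight of `m`. -/
theorem stmt4 {V : Type} [Fintype V] [DecidableEq V] (G : V → V → Prop)
    (m : DEdge G ≃ DEdge G) (hm : IsPMofH m) :
    (∀ v : V, Set.ncard {e : DEdge G | m e ≠ e ∧ e.val.1 = v}
        = Set.ncard {e : DEdge G | m e ≠ e ∧ e.val.2 = v}) ∧
    ∃ cs : List (List (DEdge G)), IsCycleCollection cs ∧
      (∀ e : DEdge G, e ∈ cs.flatten ↔ m e ≠ e) ∧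
      cs.flatten.length = pmWeight m := by
  classical
  have hconsec : ∀ x : DEdge G, m x ≠ x → Consec x (m x) :=
    fun x h => (hm x).resolve_left h
  have hmove : ∀ x : DEdge G, m x ≠ x → m (m x) ≠ m x :=
    fun x h hh => h (m.injective hh)
  constructor
  · intro v
    have himg : {e : DEdge G | m e ≠ e ∧ e.val.1 = v}
        = m '' {e : DEdge G | m e ≠ e ∧ e.val.2 = v} := by
      ext x
      simp only [Set.mem_setOf_eq, Set.mem_image]
      constructor
      · rintro ⟨hx, hxv⟩
        have h1 : m (m.symm x) ≠ m.symm x := by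
          rw [m.apply_symm_apply]
          intro h
          exact hx ((congrArg m h).trans (m.apply_symm_apply x))
        refine ⟨m.symm x, ⟨h1, ?_⟩, m.apply_symm_apply x⟩
        have := hconsec _ h1
        unfold Consec at this
        rwa [m.apply_symm_apply, hxv] at this
      · rintro ⟨y, ⟨hy, hyv⟩, rfl⟩
        refine ⟨hmove y hy, ?_⟩
        have := hconsec y hy
        unfold Consec at this
        rw [← this, hyv]
    rw [himg, Set.ncard_image_of_injective _ m.injective]
  · set S : Finset (DEdge G) := Finset.univ.filter (fun e => m e ≠ e) with hS
    have hmemS : ∀ x, x ∈ S ↔ m x ≠ x := by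
      intro x; simp [hS]
    obtain ⟨cs, h1, h2, h3⟩ := decomp_aux G m hm S
      (fun x hx => (hmemS _).2 (hmove x ((hmemS _).1 hx)))
      (fun x hx => (hmemS _).1 hx)
    refine ⟨cs, ⟨h1, h2⟩, fun x => (h3 x).trans (hmemS x), ?_⟩
    have hlen : cs.flatten.length = cs.flatten.toFinset.card :=
      (List.toFinset_card_of_nodup h2).symm
    have hfin : cs.flatten.toFinset = S := by
      ext x; simp [h3]
    rw [hlen, hfin, pmWeight]
    rw [Set.ncard_eq_toFinset_card']
    congr 1
    ext x
    simp [hS]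
end

section
/- Let E be a finite set with an injection π : E → positive integers, and assign each element e the real weight 1 + 2^{-π(e)}. If two subsets S, S' ⊆ E satisfy Σ_{e ∈ S} (1 + 2^{-π(e)}) = Σ_{e ∈ S'} (1 + 2^{-π(e)}), then S = S'. -/
private lemma stmt8_geom (N : ℕ) : ∑ m ∈ Finset.range N, 2 ^ m = 2 ^ N - 1 := by
  induction N with
  | zero => simp
  | succ k ih =>
    rw [Finset.sum_range_succ, ih, pow_succ]
    have := Nat.one_le_two_pow (n := k)
    omega

private lemma stmt8_cast (N : ℕ) (A : Finset ℕ) (hA : ∀ n ∈ A, n ≤ N) :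
    ((∑ n ∈ A, 2 ^ (N - n) : ℕ) : ℝ) = 2 ^ N * ∑ n ∈ A, (2 : ℝ) ^ (-(n : ℤ)) := by
  push_cast
  rw [Finset.mul_sum]
  refine Finset.sum_congr rfl fun n hn => ?_
  have h := hA n hn
  rw [← zpow_natCast (2 : ℝ) (N - n), ← zpow_natCast (2 : ℝ) N,
    ← zpow_add₀ (by norm_num : (2 : ℝ) ≠ 0)]
  congr 1
  omega

private lemma stmt8_bound (N : ℕ) (A : Finset ℕ) (hA : ∀ n ∈ A, 1 ≤ n ∧ n ≤ N) :
    ∑ n ∈ A, 2 ^ (N - n) < 2 ^ N := by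
  have hinj : ∀ a ∈ A, ∀ b ∈ A, (fun n => N - n) a = (fun n => N - n) b → a = b := by
    intro a ha b hb hab
    have hab' : N - a = N - b := hab
    have := hA a ha; have := hA b hb; omega
  rw [← Finset.sum_image (f := fun m => 2 ^ m) (g := fun n => N - n) hinj]
  have hsub : A.image (fun n => N - n) ⊆ Finset.range N := by
    intro m hm
    simp only [Finset.mem_image] at hm
    obtain ⟨n, hn, rfl⟩ := hm
    have := hA n hn
    simp only [Finset.mem_range]; omega
  have hle : ∑ m ∈ A.image (fun n => N - n), 2 ^ m ≤ ∑ m ∈ Finset.range N, 2 ^ m :=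
    Finset.sum_le_sum_of_subset hsub
  rw [stmt8_geom] at hle
  have := Nat.one_le_two_pow (n := N)
  omega

/-- With distinct positive integers `π e` and element weights
`1 + 2^{-π e}`, two subsets with equal total weight coincide. -/
theorem stmt8 {E : Type} [DecidableEq E]
    (π : E → ℕ) (hinj : Function.Injective π) (hpos : ∀ e, 1 ≤ π e)
    (S S' : Finset E)
    (h : (∑ e ∈ S, (1 + (2 : ℝ) ^ (-(π e : ℤ))))
        = ∑ e ∈ S', (1 + (2 : ℝ) ^ (-(π e : ℤ)))) :
    S = S' := by
  classical
  set A : Finset ℕ := S.image π with hA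
  set A' : Finset ℕ := S'.image π with hA'
  set N : ℕ := (S ∪ S').sup π with hN
  have hAbd : ∀ n ∈ A, 1 ≤ n ∧ n ≤ N := by
    intro n hn
    simp only [hA, Finset.mem_image] at hn
    obtain ⟨e, he, rfl⟩ := hn
    exact ⟨hpos e, Finset.le_sup (Finset.mem_union_left _ he)⟩
  have hA'bd : ∀ n ∈ A', 1 ≤ n ∧ n ≤ N := by
    intro n hn
    simp only [hA', Finset.mem_image] at hn
    obtain ⟨e, he, rfl⟩ := hn
    exact ⟨hpos e, Finset.le_sup (Finset.mem_union_right _ he)⟩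
  have hsplit : ∀ (T : Finset E),
      (∑ e ∈ T, (1 + (2 : ℝ) ^ (-(π e : ℤ))))
        = (T.card : ℝ) + ∑ n ∈ T.image π, (2 : ℝ) ^ (-(n : ℤ)) := by
    intro T
    rw [Finset.sum_add_distrib, Finset.sum_const, nsmul_eq_mul, mul_one,
      Finset.sum_image (fun a _ b _ hab => hinj hab)]
  have hpow_pos : (0 : ℝ) < 2 ^ N := by positivity
  have hfrac : ∀ (B : Finset ℕ), (∀ n ∈ B, 1 ≤ n ∧ n ≤ N) →
      0 ≤ (∑ n ∈ B, (2 : ℝ) ^ (-(n : ℤ))) ∧ (∑ n ∈ B, (2 : ℝ) ^ (-(n : ℤ))) < 1 := by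
    intro B hB
    refine ⟨Finset.sum_nonneg fun n _ => by positivity, ?_⟩
    have hcast := stmt8_cast N B (fun n hn => (hB n hn).2)
    have hbd := stmt8_bound N B hB
    have hlt : ((∑ n ∈ B, 2 ^ (N - n) : ℕ) : ℝ) < 2 ^ N := by
      calc ((∑ n ∈ B, 2 ^ (N - n) : ℕ) : ℝ) < ((2 ^ N : ℕ) : ℝ) := by exact_mod_cast hbd
        _ = 2 ^ N := by push_cast; ring
    rw [hcast] at hlt
    nlinarith
  obtain ⟨hf0, hf1⟩ := hfrac A hAbd
  obtain ⟨hf0', hf1'⟩ := hfrac A' hA'bd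
  rw [hsplit S, hsplit S'] at h
  have hcard : S.card = S'.card := by
    have h1 : (⌊(S.card : ℝ) + ∑ n ∈ A, (2 : ℝ) ^ (-(n : ℤ))⌋₊ : ℕ) = S.card := by
      rw [Nat.floor_eq_iff (by positivity)]
      refine ⟨by linarith, ?_⟩
      linarith
    have h2 : (⌊(S'.card : ℝ) + ∑ n ∈ A', (2 : ℝ) ^ (-(n : ℤ))⌋₊ : ℕ) = S'.card := by
      rw [Nat.floor_eq_iff (by positivity)]
      refine ⟨by linarith, ?_⟩
      linarith
    rw [← h1, ← h2, h]
  have hfs : (∑ n ∈ A, (2 : ℝ) ^ (-(n : ℤ))) = ∑ n ∈ A', (2 : ℝ) ^ (-(n : ℤ)) := by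
    rw [hcard] at h; linarith
  have hnat : (∑ n ∈ A, 2 ^ (N - n)) = ∑ n ∈ A', 2 ^ (N - n) := by
    have hc : ((∑ n ∈ A, 2 ^ (N - n) : ℕ) : ℝ) = ((∑ n ∈ A', 2 ^ (N - n) : ℕ) : ℝ) := by
      rw [stmt8_cast N A (fun n hn => (hAbd n hn).2),
        stmt8_cast N A' (fun n hn => (hA'bd n hn).2), hfs]
    exact_mod_cast hc
  have himg : A.image (fun n => N - n) = A'.image (fun n => N - n) := by
    apply Finset.geomSum_injective (le_refl 2)
    show ∑ i ∈ A.image (fun n => N - n), 2 ^ i = ∑ i ∈ A'.image (fun n => N - n), 2 ^ i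
    have e1 : ∑ i ∈ A.image (fun n => N - n), 2 ^ i = ∑ n ∈ A, 2 ^ (N - n) :=
      Finset.sum_image (fun a ha b hb hab => by
        have hab' : N - a = N - b := hab
        have := hAbd a ha; have := hAbd b hb; omega)
    have e2 : ∑ i ∈ A'.image (fun n => N - n), 2 ^ i = ∑ n ∈ A', 2 ^ (N - n) :=
      Finset.sum_image (fun a ha b hb hab => by
        have hab' : N - a = N - b := hab
        have := hA'bd a ha; have := hA'bd b hb; omega)
    rw [e1, e2]
    exact hnat
  have hAA' : A = A' := by
    ext n
    constructor
    · intro hn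
      have hmem : N - n ∈ A'.image (fun n => N - n) :=
        himg ▸ Finset.mem_image_of_mem _ hn
      simp only [Finset.mem_image] at hmem
      obtain ⟨m, hm, hmn⟩ := hmem
      have h1 := hAbd n hn; have h2 := hA'bd m hm
      have hmeq : m = n := by omega
      rwa [← hmeq]
    · intro hn
      have hmem : N - n ∈ A.image (fun n => N - n) :=
        himg ▸ Finset.mem_image_of_mem _ hn
      simp only [Finset.mem_image] at hmem
      obtain ⟨m, hm, hmn⟩ := hmem
      have h1 := hA'bd n hn; have h2 := hAbd m hm
      have hmeq : m = n := by omega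
      rwa [← hmeq]
  ext e
  constructor
  · intro he
    have : π e ∈ A' := hAA' ▸ Finset.mem_image_of_mem π he
    simp only [hA', Finset.mem_image] at this
    obtain ⟨e', he', heq⟩ := this
    rwa [← hinj heq]
  · intro he
    have : π e ∈ A := hAA' ▸ Finset.mem_image_of_mem π he
    simp only [hA, Finset.mem_image] at this
    obtain ⟨e', he', heq⟩ := this
    rwa [← hinj heq]
end

section
/- Let G be a trading graph for an instance G with reports x', and let Ḡ be the reversed instance in which every agent's demand and supply sets are swapped (so every edge of the trading graph is reversed). If M is a perfect matching of H'(G) of weight w, then the reversed matching M̄ = {(((k,j),0),((j,i),1)) : (((i,j),0),((j,k),1)) ∈ M} is a perfect matching of H'(Ḡ) of the same weight w; consequently maximum-weight perfect matchings of H'(G) and H'(Ḡ) are in weight-preserving bijection, and each agent's utility in the corresponding executions is preserved. -/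
/-- The adjacency of the trading graph for reports with demand sets `Dm` and supply
sets `Sp`: a demand edge from agent `i` to each item `j ∈ Dm i`, and a supply edge
from each item `j ∈ Sp i` to agent `i`. -/
def TAdj {N M : Type} (Dm Sp : N → Finset M) : (N ⊕ M) → (N ⊕ M) → Prop
  | .inl i, .inr j => j ∈ Dm i
  | .inr j, .inl i => j ∈ Sp i
  | _, _ => False

/-- The edges of the trading graph. -/
abbrev TEdge {N M : Type} (Dm Sp : N → Finset M) :=
  {p : (N ⊕ M) × (N ⊕ M) // TAdj Dm Sp p.1 p.2}

theorem tadj_rev {N M : Type} (Dm Sp : N → Finset M) (u v : N ⊕ M)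
    (h : TAdj Dm Sp u v) : TAdj Sp Dm v u := by
  cases u <;> cases v <;> simpa [TAdj] using h

/-- Reversing every edge of the trading graph yields the trading graph of the
reversed instance (demands and supplies swapped). -/
def trev {N M : Type} (Dm Sp : N → Finset M) : TEdge Dm Sp ≃ TEdge Sp Dm where
  toFun e := ⟨(e.val.2, e.val.1), tadj_rev Dm Sp _ _ e.2⟩
  invFun e := ⟨(e.val.2, e.val.1), tadj_rev Sp Dm _ _ e.2⟩
  left_inv e := rfl
  right_inv e := rfl

/-- Two trading-graph edges are consecutive if the head of the first is the tail of
the second. -/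
def TConsec {N M : Type} {Dm Sp : N → Finset M} (e f : TEdge Dm Sp) : Prop :=
  e.val.2 = f.val.1

/-- A perfect matching of the bipartite edge-graph `H'(G)`, encoded by the bijection
sending each `(e,0)` to its partner `(m e, 1)`: every edge is matched to its own
copy or to a consecutive edge. -/
def TIsPM {N M : Type} {Dm Sp : N → Finset M} (m : TEdge Dm Sp ≃ TEdge Dm Sp) : Prop :=
  ∀ e, m e = e ∨ TConsec e (m e)

/-- The perturbation key of an edge: the (agent, item) pair underlying it, the same
for a demand edge `(i,j)` and for the supply edge `(j,i)`. -/
def tkey {N M : Type} {Dm Sp : N → Finset M} : TEdge Dm Sp → N × M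
  | ⟨(Sum.inl i, Sum.inr j), _⟩ => (i, j)
  | ⟨(Sum.inr j, Sum.inl i), _⟩ => (i, j)
  | ⟨(Sum.inl _, Sum.inl _), h⟩ => absurd h (by simp [TAdj])
  | ⟨(Sum.inr _, Sum.inr _), h⟩ => absurd h (by simp [TAdj])

/-- The perturbed weight of a perfect matching of `H'(G)`: each edge matched to a
consecutive edge contributes `1 + 2^{-π(key)}`. -/
noncomputable def tweight {N M : Type} {Dm Sp : N → Finset M} (π : N × M → ℕ)
    (m : TEdge Dm Sp ≃ TEdge Dm Sp) : ℝ :=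
  ∑ᶠ e ∈ {e : TEdge Dm Sp | m e ≠ e}, (1 + (2 : ℝ) ^ (-(π (tkey e) : ℤ)))

/-- The utility of agent `i` derived from a matching: the number of his demand edges
matched to a consecutive edge (items received). -/
noncomputable def tutil {N M : Type} {Dm Sp : N → Finset M}
    (m : TEdge Dm Sp ≃ TEdge Dm Sp) (i : N) : ℕ :=
  Set.ncard {e : TEdge Dm Sp | (∃ j : M, e.val = (Sum.inl i, Sum.inr j)) ∧ m e ≠ e}

/-- The reversed matching `M̄`: `(((i,j),0),((j,k),1)) ∈ M` becomes
`(((k,j),0),((j,i),1)) ∈ M̄`. -/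
def tmbar {N M : Type} {Dm Sp : N → Finset M} (m : TEdge Dm Sp ≃ TEdge Dm Sp) :
    TEdge Sp Dm ≃ TEdge Sp Dm :=
  (((trev Dm Sp).symm.trans m.symm).trans (trev Dm Sp))

lemma tkey_trev {N M : Type} (Dm Sp : N → Finset M) (e : TEdge Dm Sp) :
    tkey (trev Dm Sp e) = tkey e := by
  obtain ⟨⟨u, v⟩, h⟩ := e
  cases u <;> cases v <;> first | rfl | exact absurd h (by simp [TAdj])

lemma tedge_snd_of_fst_inl {N M : Type} {Dm Sp : N → Finset M} (e : TEdge Dm Sp) (i : N)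
    (h : e.val.1 = Sum.inl i) : ∃ j, e.val = (Sum.inl i, Sum.inr j) := by
  obtain ⟨⟨u, v⟩, hadj⟩ := e
  cases u with
  | inl a =>
    cases v with
    | inl b => exact absurd hadj (by simp [TAdj])
    | inr j =>
      obtain rfl : a = i := by simpa using h
      exact ⟨j, rfl⟩
  | inr j =>
    cases v with
    | inl b => simp at h
    | inr => exact absurd hadj (by simp [TAdj])

lemma tedge_fst_of_snd_inl {N M : Type} {Dm Sp : N → Finset M} (e : TEdge Dm Sp) (i : N)
    (h : e.val.2 = Sum.inl i) : ∃ j, e.val = (Sum.inr j, Sum.inl i) := by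
  obtain ⟨⟨u, v⟩, hadj⟩ := e
  cases u with
  | inl a =>
    cases v with
    | inl b => exact absurd hadj (by simp [TAdj])
    | inr j => simp at h
  | inr j =>
    cases v with
    | inl b =>
      obtain rfl : b = i := by simpa using h
      exact ⟨j, rfl⟩
    | inr => exact absurd hadj (by simp [TAdj])

lemma tmbar_fixed_iff {N M : Type} {Dm Sp : N → Finset M}
    (m : TEdge Dm Sp ≃ TEdge Dm Sp) (e' : TEdge Sp Dm) :
    tmbar m e' = e' ↔ m ((trev Dm Sp).symm e') = (trev Dm Sp).symm e' := by
  constructor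
  · intro h
    have h1 : m.symm ((trev Dm Sp).symm e') = (trev Dm Sp).symm e' := by
      have := congrArg (trev Dm Sp).symm h
      simpa [tmbar, eq_comm] using this
    have h2 := congrArg m h1
    simp only [Equiv.apply_symm_apply] at h2
    exact h2.symm
  · intro h
    have h1 : m.symm ((trev Dm Sp).symm e') = (trev Dm Sp).symm e' := by
      have := congrArg m.symm h
      simpa [eq_comm] using this
    simp [tmbar, h1]

lemma tmbar_ne_set {N M : Type} {Dm Sp : N → Finset M}
    (m : TEdge Dm Sp ≃ TEdge Dm Sp) :
    {e' : TEdge Sp Dm | tmbar m e' ≠ e'} = trev Dm Sp '' {e | m e ≠ e} := by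
  ext e'
  simp only [Set.mem_setOf_eq, Set.mem_image]
  constructor
  · intro h
    exact ⟨(trev Dm Sp).symm e', fun hc => h ((tmbar_fixed_iff m e').2 hc),
      (trev Dm Sp).apply_symm_apply e'⟩
  · rintro ⟨e, he, rfl⟩
    intro hc
    apply he
    have := (tmbar_fixed_iff m (trev Dm Sp e)).1 hc
    simpa using this

/-- If `m` is a perfect matching of `H'(G)` then the reversed
matching is a perfect matching of `H'(Ḡ)` of the same perturbed weight, and each
agent's utility in the corresponding executions is preserved. -/
theorem stmt10 {N M : Type} [Fintype N] [Fintype M] [DecidableEq N] [DecidableEq M]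
    (Dm Sp : N → Finset M) (π : N × M → ℕ)
    (hπ : Function.Injective π) (hπ1 : ∀ p, 1 ≤ π p)
    (m : TEdge Dm Sp ≃ TEdge Dm Sp) (hm : TIsPM m) :
    TIsPM (tmbar m) ∧
    tweight π (tmbar m) = tweight π m ∧
    ∀ i : N, tutil (tmbar m) i = tutil m i := by
  set r := trev Dm Sp with hr
  refine ⟨?_, ?_, ?_⟩
  · -- perfect matching
    intro e'
    set e := r.symm e' with he
    rcases hm (m.symm e) with h | h
    · left
      have h1 : m.symm e = e := by
        have := congrArg m.symm h
        simpa [eq_comm] using this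
      show r (m.symm e) = e'
      rw [h1, he, Equiv.apply_symm_apply]
    · right
      show e'.val.2 = (r (m.symm e)).val.1
      have h2 : (r (m.symm e)).val.1 = (m.symm e).val.2 := rfl
      have h3 : (m.symm e).val.2 = (m (m.symm e)).val.1 := h
      have h4 : m (m.symm e) = e := m.apply_symm_apply e
      have h5 : e.val.1 = e'.val.2 := rfl
      rw [h2, h3, h4, h5]
  · -- weight
    rw [tweight, tmbar_ne_set m, finsum_mem_image (r.injective.injOn)]
    refine finsum_mem_congr rfl fun e _ => ?_
    rw [tkey_trev]
  · -- utility
    intro i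
    have hset : {e' : TEdge Sp Dm | (∃ j : M, e'.val = (Sum.inl i, Sum.inr j)) ∧
        tmbar m e' ≠ e'} =
        r '' {e : TEdge Dm Sp | (∃ j : M, e.val = (Sum.inr j, Sum.inl i)) ∧ m e ≠ e} := by
      ext e'
      simp only [Set.mem_setOf_eq, Set.mem_image]
      constructor
      · rintro ⟨⟨j, hj⟩, hne⟩
        refine ⟨r.symm e', ⟨⟨j, ?_⟩, fun hc => hne ((tmbar_fixed_iff m e').2 hc)⟩,
          r.apply_symm_apply e'⟩
        show ((e'.val.2, e'.val.1) : (N ⊕ M) × (N ⊕ M)) = _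
        rw [hj]
      · rintro ⟨e, ⟨⟨j, hj⟩, hne⟩, rfl⟩
        refine ⟨⟨j, ?_⟩, fun hc => hne (by simpa [hr] using (tmbar_fixed_iff m (r e)).1 hc)⟩
        show ((e.val.2, e.val.1) : (N ⊕ M) × (N ⊕ M)) = _
        rw [hj]
    have himg : m '' {e : TEdge Dm Sp | (∃ j : M, e.val = (Sum.inr j, Sum.inl i)) ∧ m e ≠ e}
        = {e : TEdge Dm Sp | (∃ j : M, e.val = (Sum.inl i, Sum.inr j)) ∧ m e ≠ e} := by
      ext f
      simp only [Set.mem_image, Set.mem_setOf_eq]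
      constructor
      · rintro ⟨e, ⟨⟨j, hj⟩, hne⟩, rfl⟩
        rcases hm e with h | h
        · exact absurd h hne
        · have h1 : (m e).val.1 = Sum.inl i := by rw [← h, hj]
          refine ⟨tedge_snd_of_fst_inl (m e) i h1, fun hc => hne (m.injective ?_)⟩
          rw [hc]
      · rintro ⟨⟨j, hj⟩, hne⟩
        have hef : m (m.symm f) = f := m.apply_symm_apply f
        have hne2 : m (m.symm f) ≠ m.symm f := by
          rw [hef]; intro hc
          apply hne
          nth_rewrite 1 [hc]
          exact hef
        rcases hm (m.symm f) with h | h
        · exact absurd h hne2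
        · have h1 : (m.symm f).val.2 = Sum.inl i := by
            rw [h, hef, hj]
          exact ⟨m.symm f, ⟨tedge_fst_of_snd_inl _ i h1, hne2⟩, hef⟩
    rw [tutil, tutil, hset, Set.ncard_image_of_injective _ r.injective, ← himg,
      Set.ncard_image_of_injective _ m.injective]
end

section
/- In the greedy lower-bound instance G_d (d ≥ 2, parameter l ≥ 2), after the giant cycle C_all through all d·l agents and d·l items is executed, no further cycle exists in the updated trading graph; hence the greedy algorithm performs exactly d·l exchanges, while the optimal execution performs l + (d−1)·l² exchanges, giving a ratio (1 + (d−1)l)/d that tends to l as d → ∞. -/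
variable {N M : Type} [DecidableEq N] [DecidableEq M]

/-- Agents (and items) of the greedy lower-bound instance `G_d`: agent `(y,k)` is
`i^k_y` (item `(y,k)` is `j^k_y`). -/
abbrev GAg (d l : ℕ) := Fin d × Fin l

/-- The item an agent demands in the next group: `j^k_{y+1}`, wrapping to
`j^{(k mod l)+1}₁` for the last group. -/
def gnxt (d l : ℕ) [NeZero d] [NeZero l] (p : GAg d l) : GAg d l :=
  if p.1.val + 1 < d then (p.1 + 1, p.2) else (p.1 + 1, p.2 + 1)

/-- Supplies: agent `i^k_y` owns exactly `j^k_y`. -/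
def GS (d l : ℕ) : GAg d l → Finset (GAg d l) := fun a => {a}

/-- Demands: `i^k_1` demands `{j^k_2}`; for `y ≥ 2`, `i^k_y` demands
`(M_y \ {j^k_y}) ∪ {next}`. -/
def GD (d l : ℕ) [NeZero d] [NeZero l] : GAg d l → Finset (GAg d l) := fun p =>
  if p.1.val = 0 then {gnxt d l p}
  else insert (gnxt d l p) ((Finset.univ.filter fun q : GAg d l => q.1 = p.1).erase p)

/-- The giant cycle `C_all` through all `d·l` agents, along the next-group demand
edges. -/
def CAll (d l : ℕ) [NeZero d] [NeZero l] : List (GAg d l × GAg d l) :=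
  (List.finRange l).flatMap fun k =>
    (List.finRange d).map fun y => (((y, k) : GAg d l), gnxt d l (y, k))

set_option linter.unusedSectionVars false
set_option maxHeartbeats 1000000

namespace St16

open Fin.NatCast

def cyc (A : List N) (rec : N → M) : List (N × M) := A.map (fun a => (a, rec a))

lemma mem_cyc {A : List N} {rec : N → M} {i : N} {j : M} :
    (i, j) ∈ cyc A rec ↔ i ∈ A ∧ j = rec i := by
  simp only [cyc, List.mem_map, Prod.mk.injEq]
  constructor
  · rintro ⟨a, ha, rfl, rfl⟩; exact ⟨ha, rfl⟩
  · rintro ⟨ha, rfl⟩; exact ⟨i, ha, rfl, rfl⟩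

lemma zip_self_map (A : List N) (gv : N → M) :
    A.zip (A.map gv) = A.map (fun a => (a, gv a)) := by
  induction A with
  | nil => simp
  | cons a A ih => simp [ih]

lemma rot_shift {A : List N} {rec gv : N → M} (h : A.map rec = (A.map gv).rotate 1) :
    (A.rotate (A.length - 1)).map rec = A.map gv := by
  rcases eq_or_ne A [] with rfl | hne
  · simp
  · rw [List.map_rotate, h, List.rotate_rotate]
    have hlen : 1 + (A.length - 1) = (A.map gv).length := by
      rw [List.length_map]
      have := List.length_pos_iff.2 hne
      omega
    rw [hlen, List.rotate_length]

lemma gives_cyc {A : List N} {rec gv : N → M} (h : A.map rec = (A.map gv).rotate 1) :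
    gives (cyc A rec) = cyc A gv := by
  have h1 : (cyc A rec).map Prod.fst = A := by simp [cyc, Function.comp_def]
  have h2 : (cyc A rec).length = A.length := by simp [cyc]
  have h3 : ((cyc A rec).rotate ((cyc A rec).length - 1)).map Prod.snd
      = A.map gv := by
    rw [h2, cyc, ← List.map_rotate, List.map_map]
    simpa [Function.comp_def] using rot_shift h
  rw [gives, h1, h3, zip_self_map]
  rfl

lemma filter_cyc_of_mem {A : List N} (hA : A.Nodup) {rec : N → M} {i : N} (hi : i ∈ A) :
    (cyc A rec).filter (fun p => decide (p.1 = i)) = [(i, rec i)] := by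
  induction A with
  | nil => simp at hi
  | cons a A ih =>
    rw [List.nodup_cons] at hA
    by_cases hai : a = i
    · subst hai
      have h0 : (cyc A rec).filter (fun p => decide (p.1 = a)) = [] := by
        rw [List.filter_eq_nil_iff]
        rintro ⟨x, y⟩ hxy
        have hx := (mem_cyc.1 hxy).1
        simp only [decide_eq_true_eq]
        rintro rfl; exact hA.1 hx
      simpa [cyc, List.filter_cons] using h0
    · have hi' : i ∈ A := by
        rcases List.mem_cons.1 hi with h | h
        · exact absurd h.symm hai
        · exact h
      have := ih hA.2 hi'
      simpa [cyc, List.filter_cons, hai] using this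

lemma filter_cyc_of_not_mem {A : List N} {rec : N → M} {i : N} (hi : i ∉ A) :
    (cyc A rec).filter (fun p => decide (p.1 = i)) = [] := by
  rw [List.filter_eq_nil_iff]
  rintro ⟨x, y⟩ hxy
  have := (mem_cyc.1 hxy).1
  simp only [decide_eq_true_eq]
  rintro rfl; exact hi this

lemma stepCycle_own_mem {s : TState N M} {A : List N} {rec gv : N → M}
    (hA : A.Nodup) (h : A.map rec = (A.map gv).rotate 1) {i : N} (hi : i ∈ A) :
    (stepCycle s (cyc A rec)).own i = (s.own i).filter (· ≠ gv i) ∪ {rec i} := by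
  have hg := gives_cyc h
  simp only [stepCycle, hg, filter_cyc_of_mem hA hi]
  ext j
  simp [mem_cyc, hi]

lemma stepCycle_dem_mem {s : TState N M} {A : List N} {rec : N → M}
    {i : N} (hi : i ∈ A) :
    (stepCycle s (cyc A rec)).dem i = (s.dem i).erase (rec i) := by
  simp only [stepCycle]
  rw [Finset.erase_eq, Finset.sdiff_eq_filter]
  apply Finset.filter_congr
  intro j _
  simp [mem_cyc, hi, eq_comm]

lemma stepCycle_own_not_mem {s : TState N M} {A : List N} {rec gv : N → M}
    (h : A.map rec = (A.map gv).rotate 1) {i : N} (hi : i ∉ A) :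
    (stepCycle s (cyc A rec)).own i = s.own i := by
  have hg := gives_cyc h
  simp only [stepCycle, hg, filter_cyc_of_not_mem hi]
  rw [show (([] : List (N × M)).map Prod.snd).toFinset = ∅ by simp, Finset.union_empty]
  rw [Finset.filter_eq_self]
  intro j _
  simp [mem_cyc]
  intro h'; exact absurd h' hi

lemma stepCycle_dem_not_mem {s : TState N M} {A : List N} {rec : N → M}
    {i : N} (hi : i ∉ A) :
    (stepCycle s (cyc A rec)).dem i = s.dem i := by
  simp only [stepCycle]
  rw [Finset.filter_eq_self]
  intro j _
  simp [mem_cyc]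
  intro h'; exact absurd h' hi

lemma validExec_append {s : TState N M} {r1 r2 : List (List (N × M))} :
    ValidExec s (r1 ++ r2) ↔ ValidExec s r1 ∧ ValidExec (r1.foldl stepCycle s) r2 := by
  induction r1 generalizing s with
  | nil => simp [ValidExec]
  | cons c r ih => simp [ValidExec, ih, and_assoc]



lemma rotate_one_range_map {α : Type*} (f : ℕ → α) (n : ℕ) (hn : 0 < n) :
    ((List.range n).map f).rotate 1 = (List.range n).map (fun t => f ((t+1) % n)) := by
  cases n with
  | zero => omega
  | succ m =>
    have h1 : ((List.range (m+1)).map f).rotate 1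
        = (List.range m).map (f ∘ Nat.succ) ++ [f 0] := by
      rw [List.range_succ_eq_map, List.map_cons, List.map_map, List.rotate_cons_succ,
        List.rotate_zero]
    rw [h1, List.range_succ, List.map_append]
    congr 1
    · apply List.map_congr_left
      intro a ha
      have : a < m := List.mem_range.1 ha
      simp [Function.comp, Nat.mod_eq_of_lt (by omega : a + 1 < m + 1)]
    · simp

lemma rot1_range {α : Type*} {n : ℕ} (hn : 0 < n) (e : ℕ → α) (rec gv : α → α)
    (h : ∀ t, t < n → rec (e t) = gv (e ((t+1) % n))) :
    ((List.range n).map e).map rec = (((List.range n).map e).map gv).rotate 1 := by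
  rw [List.map_map, List.map_map, rotate_one_range_map (gv ∘ e) n hn]
  apply List.map_congr_left
  intro a ha
  exact h a (List.mem_range.1 ha)

lemma range_mul_flatMap {α : Type*} (f : ℕ → α) (l d : ℕ) :
    (List.range (l*d)).map f
      = (List.range l).flatMap (fun k => (List.range d).map (fun y => f (k*d + y))) := by
  induction l with
  | zero => simp
  | succ m ih =>
    rw [show (m+1)*d = m*d + d by ring, List.range_add, List.map_append, List.map_map, ih,
      List.range_succ, List.flatMap_append]
    simp [Function.comp_def]

lemma finRange_eq (n : ℕ) [NeZero n] :
    List.finRange n = (List.range n).map (Nat.cast) := by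
  apply List.ext_getElem
  · simp
  · intro i h1 h2
    rw [List.getElem_finRange, List.getElem_map, List.getElem_range]
    have hi : i < n := by simpa using h1
    ext
    simp [Fin.val_natCast, Nat.mod_eq_of_lt hi]

section GInstance

variable (d l : ℕ) [NeZero d] [NeZero l]

lemma cyc_map_fst {A : List N} {rec : N → M} : (cyc A rec).map Prod.fst = A := by
  simp [cyc, Function.comp_def]

lemma cyc_map_snd {A : List N} {rec : N → M} : (cyc A rec).map Prod.snd = A.map rec := by
  simp [cyc, Function.comp_def]

def eA (t : ℕ) : GAg d l := ((t : Fin d), ((t / d : ℕ) : Fin l))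

lemma eA_mul_add (k y : ℕ) (hy : y < d) : eA d l (k*d + y) = ((y : Fin d), (k : Fin l)) := by
  have hd : 0 < d := Nat.pos_of_ne_zero (NeZero.ne d)
  unfold eA
  have h1 : (k * d + y) / d = k := by
    rw [mul_comm, Nat.mul_add_div hd, Nat.div_eq_of_lt hy, add_zero]
  rw [h1]
  congr 1
  ext
  rw [Fin.val_natCast, Fin.val_natCast, mul_comm, Nat.mul_add_mod]

def Aall : List (GAg d l) := (List.range (l*d)).map (eA d l)

lemma cAll_eq : CAll d l = cyc (Aall d l) (gnxt d l) := by
  rw [CAll, finRange_eq l, finRange_eq d, cyc, Aall, List.map_map, range_mul_flatMap]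
  rw [List.flatMap_def, List.flatMap_def, List.map_map]
  congr 1
  apply List.map_congr_left
  intro k hk
  simp only [Function.comp_def, List.map_map]
  apply List.map_congr_left
  intro y hy
  rw [eA_mul_add d l k y (List.mem_range.1 hy)]

lemma eA_inj {t t' : ℕ} (ht : t < l*d) (ht' : t' < l*d) (h : eA d l t = eA d l t') :
    t = t' := by
  have hd : 0 < d := Nat.pos_of_ne_zero (NeZero.ne d)
  rw [eA, eA, Prod.mk.injEq] at h
  have h1 : t % d = t' % d := by
    have := congrArg Fin.val h.1
    rwa [Fin.val_natCast, Fin.val_natCast] at this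
  have hq : t / d < l := Nat.div_lt_of_lt_mul (by rw [mul_comm d l]; exact ht)
  have hq' : t' / d < l := Nat.div_lt_of_lt_mul (by rw [mul_comm d l]; exact ht')
  have h2 : t / d = t' / d := by
    have := congrArg Fin.val h.2
    rwa [Fin.val_natCast, Fin.val_natCast, Nat.mod_eq_of_lt hq, Nat.mod_eq_of_lt hq'] at this
  calc t = d * (t / d) + t % d := (Nat.div_add_mod t d).symm
    _ = d * (t' / d) + t' % d := by rw [h1, h2]
    _ = t' := Nat.div_add_mod t' d

lemma eA_surj (a : GAg d l) : ∃ t, t < l*d ∧ eA d l t = a := by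
  refine ⟨a.2.val * d + a.1.val, ?_, ?_⟩
  · have h1 : a.2.val + 1 ≤ l := a.2.isLt
    calc a.2.val * d + a.1.val < a.2.val * d + d := by omega
      _ = (a.2.val + 1) * d := by ring
      _ ≤ l * d := Nat.mul_le_mul_right d h1
  · rw [eA_mul_add d l _ _ a.1.isLt, Fin.cast_val_eq_self, Fin.cast_val_eq_self]

lemma mem_Aall (a : GAg d l) : a ∈ Aall d l := by
  obtain ⟨t, ht, rfl⟩ := eA_surj d l a
  exact List.mem_map.2 ⟨t, List.mem_range.2 ht, rfl⟩

lemma nodup_Aall : (Aall d l).Nodup :=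
  List.nodup_range.map_on fun x hx y hy h =>
    eA_inj d l (List.mem_range.1 hx) (List.mem_range.1 hy) h

lemma gnxt_eA {t : ℕ} (ht : t < l*d) :
    gnxt d l (eA d l t) = eA d l ((t+1) % (l*d)) := by
  have hd : 0 < d := Nat.pos_of_ne_zero (NeZero.ne d)
  have hl : 0 < l := Nat.pos_of_ne_zero (NeZero.ne l)
  have hr : t % d < d := Nat.mod_lt _ hd
  have he : d * (t / d) + t % d = t := Nat.div_add_mod t d
  rw [gnxt, eA]
  simp only [Fin.val_natCast]
  by_cases hc : t % d + 1 < d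
  · rw [if_pos hc]
    have ht1 : t + 1 < l * d := by
      rcases Nat.lt_or_ge (t+1) (l*d) with h | h
      · exact h
      have he2 : t + 1 = l * d := by omega
      have h0 : (l * d) % d = 0 := Nat.mul_mod_left l d
      have h1 : (t + 1) % d = t % d + 1 := by
        rw [Nat.add_mod, Nat.mod_eq_of_lt (show 1 < d by omega)]
        exact Nat.mod_eq_of_lt hc
      rw [he2] at h1
      omega
    rw [Nat.mod_eq_of_lt ht1, eA]
    have hdiv : (t+1) / d = t / d := by
      rw [show t + 1 = d * (t/d) + (t % d + 1) by omega, Nat.mul_add_div hd,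
        Nat.div_eq_of_lt hc, add_zero]
    rw [hdiv]
    congr 1
    exact (Nat.cast_add_one t).symm
  · rw [if_neg hc]
    have hrd : t % d + 1 = d := by omega
    by_cases ht1 : t + 1 < l * d
    · rw [Nat.mod_eq_of_lt ht1, eA]
      have hdiv : (t+1) / d = t / d + 1 := by
        rw [show t + 1 = d * (t/d + 1) by rw [Nat.mul_succ]; omega,
          Nat.mul_div_cancel_left _ hd]
      rw [hdiv]
      congr 1
      · exact (Nat.cast_add_one t).symm
      · exact (Nat.cast_add_one (t/d)).symm
    · have he2 : t + 1 = l * d := by omega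
      rw [he2, Nat.mod_self, eA]
      have hql : t / d + 1 = l := by
        have h3 : d * (l - 1) = d * l - d := by rw [Nat.mul_sub_one]
        have h4 : d * l = l * d := mul_comm d l
        have h5 : d * (t/d) = d * (l-1) := by omega
        have h6 : t / d = l - 1 := Nat.eq_of_mul_eq_mul_left hd h5
        omega
      have c1 : ((t : Fin d)) + 1 = ((0:ℕ) : Fin d) := by
        have : (((t+1 : ℕ)) : Fin d) = ((0:ℕ) : Fin d) := by
          ext
          rw [Fin.val_natCast, Fin.val_natCast, he2, Nat.mul_mod_left, Nat.zero_mod]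
        rwa [Nat.cast_add, Nat.cast_one] at this
      have c2 : ((t / d : ℕ) : Fin l) + 1 = ((0 / d : ℕ) : Fin l) := by
        have : (((t/d + 1 : ℕ)) : Fin l) = ((0/d : ℕ) : Fin l) := by
          ext
          rw [Fin.val_natCast, Fin.val_natCast, hql, Nat.mod_self, Nat.zero_div, Nat.zero_mod]
        rwa [Nat.cast_add, Nat.cast_one] at this
      rw [c1, c2]

lemma hrotA : (Aall d l).map (gnxt d l) = ((Aall d l).map id).rotate 1 := by
  rw [List.map_id, Aall]
  have h := rot1_range (n := l*d) (Nat.mul_pos (Nat.pos_of_ne_zero (NeZero.ne l)) (Nat.pos_of_ne_zero (NeZero.ne d))) (eA d l) (gnxt d l) id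
    (fun t ht => by rw [gnxt_eA d l ht]; rfl)
  simpa using h

lemma gnxt_mem_GD (i : GAg d l) : gnxt d l i ∈ GD d l i := by
  rw [GD]
  split
  · exact Finset.mem_singleton_self _
  · exact Finset.mem_insert_self _ _

lemma validCycle_CAll : ValidCycle ⟨GS d l, GD d l⟩ (CAll d l) := by
  rw [cAll_eq]
  refine ⟨?_, ?_, ?_, ?_, ?_⟩
  · have : (cyc (Aall d l) (gnxt d l)).length = l * d := by simp [cyc, Aall]
    intro h
    rw [h] at this
    simp at this
    have hd : 0 < d := Nat.pos_of_ne_zero (NeZero.ne d)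
    have hl : 0 < l := Nat.pos_of_ne_zero (NeZero.ne l)
    rcases this with h | h <;> omega
  · rw [cyc_map_fst]; exact nodup_Aall d l
  · rw [cyc_map_snd, hrotA, List.map_id]
    exact List.nodup_rotate.2 (nodup_Aall d l)
  · rintro ⟨i, j⟩ hp
    obtain ⟨-, rfl⟩ := mem_cyc.1 hp
    exact gnxt_mem_GD d l i
  · rintro ⟨i, j⟩ hp
    rw [gives_cyc (hrotA d l)] at hp
    obtain ⟨-, rfl⟩ := mem_cyc.1 hp
    simp [GS]

lemma st1_own (i : GAg d l) :
    (stepCycle ⟨GS d l, GD d l⟩ (CAll d l)).own i = {gnxt d l i} := by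
  rw [cAll_eq, stepCycle_own_mem (nodup_Aall d l) (hrotA d l) (mem_Aall d l i)]
  show (GS d l i).filter (· ≠ id i) ∪ {gnxt d l i} = {gnxt d l i}
  rw [GS, id]
  rw [Finset.filter_singleton]
  simp

lemma st1_dem (i : GAg d l) :
    (stepCycle ⟨GS d l, GD d l⟩ (CAll d l)).dem i = (GD d l i).erase (gnxt d l i) := by
  rw [cAll_eq, stepCycle_dem_mem (mem_Aall d l i)]

end GInstance

section Parts

variable (d l : ℕ) [NeZero d] [NeZero l]

lemma dem1_spec (i j : GAg d l) (hj : j ∈ (GD d l i).erase (gnxt d l i)) :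
    i.1.val ≠ 0 ∧ j.1 = i.1 := by
  rw [Finset.mem_erase, GD] at hj
  obtain ⟨hne, hj⟩ := hj
  split at hj
  · exact absurd (Finset.mem_singleton.1 hj) hne
  · refine ⟨by assumption, ?_⟩
    rcases Finset.mem_insert.1 hj with h | h
    · exact absurd h hne
    · exact (Finset.mem_filter.1 (Finset.mem_of_mem_erase h)).2

lemma gnxt_fst (i : GAg d l) : (gnxt d l i).1 = i.1 + 1 := by
  rw [gnxt]; split <;> rfl

lemma no_cycle_after (c : List (GAg d l × GAg d l)) :
    ¬ ValidCycle (stepCycle ⟨GS d l, GD d l⟩ (CAll d l)) c := by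
  rintro ⟨hne, hfst, hsnd, hdem, hgive⟩
  set n := c.length with hn
  have hnpos : 0 < n := List.length_pos_iff.2 hne
  have hDem : ∀ p ∈ c, p.1.1.val ≠ 0 ∧ p.2.1 = p.1.1 := by
    intro p hp
    have h := hdem p hp
    rw [st1_dem] at h
    exact dem1_spec d l _ _ h
  have hlenrot : (c.rotate (n-1)).length = n := by rw [List.length_rotate]
  have hGive : ∀ (t : ℕ) (h : t < n),
      (c.get ⟨(t + (n-1)) % n, Nat.mod_lt _ hnpos⟩).2 = gnxt d l (c.get ⟨t, h⟩).1 := by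
    intro t h
    have hlen : (gives c).length = n := by
      rw [gives, List.length_zip, List.length_map, List.length_map, hlenrot, ← hn, min_self]
    have hget : (gives c).get ⟨t, by omega⟩
        = ((c.get ⟨t, h⟩).1, (c.get ⟨(t + (n-1)) % n, Nat.mod_lt _ hnpos⟩).2) := by
      simp only [gives, List.get_eq_getElem, List.getElem_zip, List.getElem_map]
      congr 2
      have hrg := List.get_rotate c (n-1) ⟨t, by rw [hlenrot]; exact h⟩
      simp only [List.get_eq_getElem] at hrg
      exact hrg
    have hmem : (gives c).get ⟨t, by omega⟩ ∈ gives c := List.get_mem _ _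
    have h2 := hgive _ hmem
    rw [hget] at h2
    have h3 : ((c.get ⟨t, h⟩).1, (c.get ⟨(t + (n-1)) % n, Nat.mod_lt _ hnpos⟩).2).2
        ∈ ({gnxt d l (c.get ⟨t, h⟩).1} : Finset (GAg d l)) := by
      rw [← st1_own d l]
      exact h2
    simpa using h3
  have key : ∀ t : ℕ, (c.get ⟨t % n, Nat.mod_lt _ hnpos⟩).1.1.val
      = (c.get ⟨(t+1) % n, Nat.mod_lt _ hnpos⟩).1.1.val + 1 := by
    intro t
    have h1 : (t+1) % n < n := Nat.mod_lt _ hnpos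
    have hg := hGive ((t+1) % n) h1
    have hidx : ((t+1) % n + (n-1)) % n = t % n := by
      rw [Nat.mod_add_mod, show t + 1 + (n-1) = t + n by omega, Nat.add_mod_right]
    simp only [hidx] at hg
    have hdem1 := hDem (c.get ⟨t % n, Nat.mod_lt _ hnpos⟩)
      (List.get_mem c ⟨t % n, Nat.mod_lt _ hnpos⟩)
    have hdem2 := hDem (c.get ⟨(t+1) % n, Nat.mod_lt _ hnpos⟩)
      (List.get_mem c ⟨(t+1) % n, Nat.mod_lt _ hnpos⟩)
    have hF : (c.get ⟨t % n, Nat.mod_lt _ hnpos⟩).1.1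
        = (c.get ⟨(t+1) % n, Nat.mod_lt _ hnpos⟩).1.1 + 1 := by
      rw [← hdem1.2, hg, gnxt_fst]
    have hv := congrArg Fin.val hF
    rw [Fin.val_add] at hv
    have hd2 : 2 ≤ d := by
      by_contra hcon
      have hd1 : d = 1 := by
        have := Nat.pos_of_ne_zero (NeZero.ne d); omega
      have := hdem1.1
      have hlt := (c.get ⟨t % n, Nat.mod_lt _ hnpos⟩).1.1.isLt
      omega
    have h1d : (1 : Fin d).val = 1 := by
      rw [Fin.val_one']
      exact Nat.mod_eq_of_lt (by omega)
    rw [h1d] at hv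
    have hlt2 := (c.get ⟨(t+1) % n, Nat.mod_lt _ hnpos⟩).1.1.isLt
    have hne1 := hdem1.1
    rcases Nat.lt_or_ge ((c.get ⟨(t+1) % n, Nat.mod_lt _ hnpos⟩).1.1.val + 1) d with h | h
    · rw [Nat.mod_eq_of_lt h] at hv; exact hv
    · have : (c.get ⟨(t+1) % n, Nat.mod_lt _ hnpos⟩).1.1.val + 1 = d := by omega
      rw [this, Nat.mod_self] at hv
      exact absurd hv hne1
  have chain : ∀ m : ℕ, (c.get ⟨0 % n, Nat.mod_lt _ hnpos⟩).1.1.val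
      = (c.get ⟨m % n, Nat.mod_lt _ hnpos⟩).1.1.val + m := by
    intro m
    induction m with
    | zero => simp
    | succ k ih =>
      rw [ih, key k]
      ring
  have h1 := chain d
  have h2 := (c.get ⟨0 % n, Nat.mod_lt _ hnpos⟩).1.1.isLt
  omega

lemma static_CAll : StaticExec [CAll d l] := by
  have h := (validCycle_CAll d l).2.2.1
  simpa [StaticExec] using h

lemma exch_CAll : exchanges [CAll d l] = d * l := by
  have h : (CAll d l).length = l * d := by rw [cAll_eq]; simp [cyc, Aall]
  simp [exchanges, h, mul_comm]

lemma static_bound (r : List (List (GAg d l × GAg d l))) (hr : StaticExec r) :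
    exchanges r ≤ d * l := by
  have h1 : exchanges r = r.flatten.length := by
    rw [exchanges, List.length_flatten]
  have h3 := hr.length_le_card
  rw [List.length_map] at h3
  have hcard : Fintype.card (GAg d l) = d * l := by
    simp [Fintype.card_prod]
  rw [hcard] at h3
  omega

lemma limit_part : Filter.Tendsto (fun m : ℕ => (1 + ((m : ℝ) - 1) * l) / m)
    Filter.atTop (nhds l) := by
  have h0 : Filter.Tendsto (fun m : ℕ => ((1:ℝ) - l) / m) Filter.atTop (nhds 0) :=
    Filter.Tendsto.div_atTop tendsto_const_nhds tendsto_natCast_atTop_atTop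
  have h1 : Filter.Tendsto (fun m : ℕ => (l:ℝ) + (1 - l)/m) Filter.atTop (nhds ((l:ℝ) + 0)) :=
    tendsto_const_nhds.add h0
  rw [add_zero] at h1
  apply h1.congr'
  filter_upwards [Filter.eventually_ge_atTop 1] with m hm
  have hm' : (m:ℝ) ≠ 0 := by
    have : (0:ℝ) < m := by exact_mod_cast Nat.lt_of_lt_of_le Nat.zero_lt_one hm
    exact ne_of_gt this
  field_simp
  ring

end Parts

section PhaseA

variable (d l : ℕ) [NeZero d] [NeZero l]

lemma lpos : 0 < l := Nat.pos_of_ne_zero (NeZero.ne l)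

lemma fin_cast_mod (a : ℕ) : (((a % l : ℕ)) : Fin l) = (a : Fin l) := by
  ext
  rw [Fin.val_natCast, Fin.val_natCast, Nat.mod_mod_of_dvd _ dvd_rfl]

def eR (y : Fin d) (k : ℕ) : GAg d l := (y, (k : Fin l))

def AR (y : Fin d) : List (GAg d l) := (List.range l).map (eR d l y)

def rcf (t : ℕ) : GAg d l → GAg d l := fun p => (p.1, p.2 + ((t : ℕ) : Fin l))

def RC (y : Fin d) (t : ℕ) : List (GAg d l × GAg d l) := cyc (AR d l y) (rcf d l t)

lemma hrotR (y : Fin d) (t : ℕ) :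
    (AR d l y).map (rcf d l (t+1)) = ((AR d l y).map (rcf d l t)).rotate 1 := by
  apply rot1_range (lpos l) (eR d l y)
  intro k hk
  unfold eR rcf
  simp only
  congr 1
  rw [fin_cast_mod, ← Nat.cast_add, ← Nat.cast_add]
  congr 1
  omega

lemma mem_AR {y : Fin d} {i : GAg d l} : i ∈ AR d l y ↔ i.1 = y := by
  constructor
  · intro h
    obtain ⟨k, hk, rfl⟩ := List.mem_map.1 h
    rfl
  · intro h
    refine List.mem_map.2 ⟨i.2.val, List.mem_range.2 i.2.isLt, ?_⟩
    rw [eR, Fin.cast_val_eq_self, ← h]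

lemma nodup_AR (y : Fin d) : (AR d l y).Nodup := by
  apply List.nodup_range.map_on
  intro x hx x' hx' h
  rw [eR, eR, Prod.mk.injEq] at h
  have := congrArg Fin.val h.2
  rwa [Fin.val_natCast, Fin.val_natCast, Nat.mod_eq_of_lt (List.mem_range.1 hx),
    Nat.mod_eq_of_lt (List.mem_range.1 hx')] at this

lemma rcf_inj (c : ℕ) : Function.Injective (rcf d l c) := by
  intro p q h
  rw [rcf, rcf, Prod.mk.injEq] at h
  exact Prod.ext h.1 (add_right_cancel h.2)

lemma nodup_AR_map (y : Fin d) (c : ℕ) : ((AR d l y).map (rcf d l c)).Nodup :=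
  (nodup_AR d l y).map (rcf_inj d l c)

def Pat (y : Fin d) (t : ℕ) (s : TState (GAg d l) (GAg d l)) : Prop :=
  ∀ k : Fin l, s.own (y,k) = {((y, k + ((t:ℕ) : Fin l)) : GAg d l)} ∧
    s.dem (y,k) = insert (gnxt d l (y,k))
      ((Finset.Ico (t+1) l).image (fun m => ((y, k + ((m:ℕ) : Fin l)) : GAg d l)))

lemma gnxt_fst_ne (hd2 : 2 ≤ d) (i : GAg d l) : (gnxt d l i).1 ≠ i.1 := by
  rw [gnxt_fst]
  intro h
  have h2 : i.1 + 1 = i.1 + 0 := by rw [add_zero]; exact h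
  have h3 : (1 : Fin d) = 0 := add_left_cancel h2
  have := congrArg Fin.val h3
  rw [Fin.val_one', Nat.mod_eq_of_lt (by omega), Fin.val_zero] at this
  omega

lemma shift_inj {k : Fin l} {m m' : ℕ} (hm : m < l) (hm' : m' < l)
    (h : k + ((m:ℕ) : Fin l) = k + ((m':ℕ) : Fin l)) : m = m' := by
  have h2 : ((m:ℕ) : Fin l) = ((m':ℕ) : Fin l) := add_left_cancel h
  have := congrArg Fin.val h2
  rwa [Fin.val_natCast, Fin.val_natCast, Nat.mod_eq_of_lt hm, Nat.mod_eq_of_lt hm'] at this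

lemma GD_pat (hd2 : 2 ≤ d) (y : Fin d) (hy : y.val ≠ 0) (k : Fin l) :
    GD d l (y,k) = insert (gnxt d l (y,k))
      ((Finset.Ico 1 l).image (fun m => ((y, k + ((m:ℕ) : Fin l)) : GAg d l))) := by
  rw [GD]
  rw [if_neg hy]
  congr 1
  ext ⟨a, b⟩
  simp only [Finset.mem_erase, Finset.mem_filter, Finset.mem_univ, true_and,
    Finset.mem_image, Finset.mem_Ico, Prod.mk.injEq, ne_eq]
  constructor
  · rintro ⟨hne, rfl⟩
    have hbk : b ≠ k := by
      intro h; exact hne ⟨rfl, h⟩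
    refine ⟨(b - k).val, ⟨?_, (b - k).isLt⟩, rfl, ?_⟩
    · by_contra h
      have h0 : (b - k).val = 0 := by omega
      have : b - k = 0 := Fin.ext h0
      exact hbk (by rwa [sub_eq_zero] at this)
    · rw [Fin.cast_val_eq_self, add_comm, sub_add_cancel]
  · rintro ⟨m, ⟨hm1, hm2⟩, rfl, rfl⟩
    refine ⟨?_, rfl⟩
    rintro ⟨-, h2⟩
    have : ((m:ℕ) : Fin l) = 0 := by
      have h3 : k + ((m:ℕ) : Fin l) = k + 0 := by rw [add_zero]; exact h2
      exact add_left_cancel h3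
    have := congrArg Fin.val this
    rw [Fin.val_natCast, Nat.mod_eq_of_lt hm2, Fin.val_zero] at this
    omega

lemma round_step (hd2 : 2 ≤ d) (y : Fin d) (t : ℕ) (ht : t + 1 < l)
    (s : TState (GAg d l) (GAg d l)) (hs : Pat d l y t s) :
    ValidCycle s (RC d l y (t+1)) ∧ Pat d l y (t+1) (stepCycle s (RC d l y (t+1))) ∧
    (∀ i : GAg d l, i.1 ≠ y → (stepCycle s (RC d l y (t+1))).own i = s.own i ∧
      (stepCycle s (RC d l y (t+1))).dem i = s.dem i) := by
  have hrot := hrotR d l y t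
  refine ⟨⟨?_, ?_, ?_, ?_, ?_⟩, ?_, ?_⟩
  · have hlen : (RC d l y (t+1)).length = l := by simp [RC, cyc, AR]
    intro h
    rw [h] at hlen
    simp at hlen
    omega
  · rw [RC, cyc_map_fst]; exact nodup_AR d l y
  · rw [RC, cyc_map_snd]; exact nodup_AR_map d l y (t+1)
  · rintro ⟨i, j⟩ hp
    obtain ⟨hi, rfl⟩ := mem_cyc.1 hp
    obtain ⟨k, hk, rfl⟩ := List.mem_map.1 hi
    show rcf d l (t+1) (eR d l y k) ∈ s.dem (eR d l y k)
    rw [show eR d l y k = ((y, ((k:ℕ) : Fin l)) : GAg d l) from rfl, (hs _).2]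
    exact Finset.mem_insert_of_mem
      (Finset.mem_image.2 ⟨t+1, Finset.mem_Ico.2 ⟨le_refl _, ht⟩, rfl⟩)
  · rintro ⟨i, j⟩ hp
    rw [RC, gives_cyc hrot] at hp
    obtain ⟨hi, rfl⟩ := mem_cyc.1 hp
    obtain ⟨k, hk, rfl⟩ := List.mem_map.1 hi
    show rcf d l t (eR d l y k) ∈ s.own (eR d l y k)
    rw [show eR d l y k = ((y, ((k:ℕ) : Fin l)) : GAg d l) from rfl, (hs _).1]
    exact Finset.mem_singleton_self _
  · intro k
    have hmem : ((y, k) : GAg d l) ∈ AR d l y := (mem_AR d l).2 rfl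
    constructor
    · rw [RC, stepCycle_own_mem (nodup_AR d l y) hrot hmem, (hs k).1]
      have : rcf d l t (y, k) = ((y, k + ((t:ℕ) : Fin l)) : GAg d l) := rfl
      rw [this, Finset.filter_singleton]
      simp [rcf]
    · rw [RC, stepCycle_dem_mem hmem, (hs k).2]
      have hrcf : rcf d l (t+1) (y, k) = ((y, k + (((t+1):ℕ) : Fin l)) : GAg d l) := rfl
      rw [hrcf]
      ext j
      simp only [Finset.mem_erase, Finset.mem_insert, Finset.mem_image, Finset.mem_Ico, ne_eq]
      constructor
      · rintro ⟨hne, h | ⟨m, ⟨hm1, hm2⟩, rfl⟩⟩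
        · exact Or.inl h
        · refine Or.inr ⟨m, ⟨?_, hm2⟩, rfl⟩
          rcases Nat.lt_or_ge m (t+2) with h2 | h2
          · exfalso
            have : m = t + 1 := by omega
            subst this
            exact hne rfl
          · exact h2
      · rintro (rfl | ⟨m, ⟨hm1, hm2⟩, rfl⟩)
        · refine ⟨fun h => gnxt_fst_ne d l hd2 ((y,k) : GAg d l) ?_, Or.inl rfl⟩
          have h2 := congrArg Prod.fst h
          exact h2
        · refine ⟨?_, Or.inr ⟨m, ⟨by omega, hm2⟩, rfl⟩⟩
          intro h
          have : m = t + 1 := by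
            have h2 : k + ((m:ℕ) : Fin l) = k + (((t+1:ℕ)) : Fin l) := by
              have := congrArg Prod.snd h
              exact this
            exact shift_inj l hm2 ht h2
          omega
  · intro i hi
    have hnmem : i ∉ AR d l y := fun h => hi ((mem_AR d l).1 h)
    exact ⟨by rw [RC, stepCycle_own_not_mem hrot hnmem],
      by rw [RC, stepCycle_dem_not_mem hnmem]⟩

def rots (y : Fin d) : List (List (GAg d l × GAg d l)) :=
  (List.range (l-1)).map (fun t => RC d l y (t+1))

lemma rots_exec (hd2 : 2 ≤ d) (y : Fin d) :
    ∀ m, m ≤ l - 1 → ∀ s : TState (GAg d l) (GAg d l), Pat d l y 0 s →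
    ValidExec s ((List.range m).map (fun t => RC d l y (t+1))) ∧
    Pat d l y m (List.foldl stepCycle s ((List.range m).map (fun t => RC d l y (t+1)))) ∧
    (∀ i : GAg d l, i.1 ≠ y →
      (List.foldl stepCycle s ((List.range m).map (fun t => RC d l y (t+1)))).own i = s.own i ∧
      (List.foldl stepCycle s ((List.range m).map (fun t => RC d l y (t+1)))).dem i = s.dem i) := by
  intro m
  induction m with
  | zero => exact fun _ s h0 => ⟨trivial, h0, fun i _ => ⟨rfl, rfl⟩⟩
  | succ m ih =>
    intro hm s h0
    obtain ⟨hv, hp, hu⟩ := ih (by omega) s h0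
    have hml : m + 1 < l := by
      have := lpos l
      omega
    obtain ⟨hc, hp2, hu2⟩ := round_step d l hd2 y m hml _ hp
    rw [List.range_succ, List.map_append, List.map_cons, List.map_nil]
    refine ⟨validExec_append.2 ⟨hv, hc, trivial⟩, ?_, ?_⟩
    · rw [List.foldl_append]
      exact hp2
    · intro i hi
      rw [List.foldl_append]
      simp only [List.foldl_cons, List.foldl_nil]
      obtain ⟨o1, o2⟩ := hu2 i hi
      obtain ⟨o3, o4⟩ := hu i hi
      exact ⟨by rw [o1, o3], by rw [o2, o4]⟩

end PhaseA

section PhaseA2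

variable (d l : ℕ) [NeZero d] [NeZero l]

lemma Pat_congr (y : Fin d) (t : ℕ) {s s' : TState (GAg d l) (GAg d l)}
    (h : ∀ k : Fin l, s'.own (y,k) = s.own (y,k) ∧ s'.dem (y,k) = s.dem (y,k))
    (hp : Pat d l y t s) : Pat d l y t s' := fun k => by
  rw [(h k).1, (h k).2]; exact hp k

lemma init_Pat (hd2 : 2 ≤ d) (y : Fin d) (hy : y.val ≠ 0) :
    Pat d l y 0 ⟨GS d l, GD d l⟩ := by
  intro k
  constructor
  · show GS d l (y,k) = _
    rw [GS]
    congr 2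
    rw [Nat.cast_zero, add_zero]
  · show GD d l (y,k) = _
    rw [GD_pat d l hd2 y hy k]

lemma phaseA (hd2 : 2 ≤ d) : ∀ (G : List (Fin d)), G.Nodup → (∀ y ∈ G, y.val ≠ 0) →
    ∀ s : TState (GAg d l) (GAg d l), (∀ y ∈ G, Pat d l y 0 s) →
    ValidExec s (G.flatMap (rots d l)) ∧
    (∀ y ∈ G, Pat d l y (l-1) (List.foldl stepCycle s (G.flatMap (rots d l)))) ∧
    (∀ i : GAg d l, i.1 ∉ G →
      (List.foldl stepCycle s (G.flatMap (rots d l))).own i = s.own i ∧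
      (List.foldl stepCycle s (G.flatMap (rots d l))).dem i = s.dem i) := by
  intro G
  induction G with
  | nil =>
    intro _ _ s h
    exact ⟨trivial, by simp, fun i _ => ⟨rfl, rfl⟩⟩
  | cons y G ih =>
    intro hnd h0 s hPat
    rw [List.flatMap_cons]
    obtain ⟨hv1, hp1, hu1⟩ := rots_exec d l hd2 y (l-1) le_rfl s
      (hPat y (List.mem_cons_self))
    have hrots : (List.range (l-1)).map (fun t => RC d l y (t+1)) = rots d l y := rfl
    rw [hrots] at hv1 hp1 hu1
    have hPat1 : ∀ y' ∈ G, Pat d l y' 0 (List.foldl stepCycle s (rots d l y)) := by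
      intro y' hy'
      have hyy : y' ≠ y := fun h => (List.nodup_cons.1 hnd).1 (h ▸ hy')
      exact Pat_congr d l y' 0 (fun k => hu1 (y',k) (by simpa using hyy))
        (hPat y' (List.mem_cons_of_mem _ hy'))
    obtain ⟨hv2, hp2, hu2⟩ := ih (List.nodup_cons.1 hnd).2
      (fun y' h => h0 y' (List.mem_cons_of_mem _ h))
      (List.foldl stepCycle s (rots d l y)) hPat1
    refine ⟨validExec_append.2 ⟨hv1, hv2⟩, ?_, ?_⟩
    · intro y' hy'
      rw [List.foldl_append]
      rcases List.mem_cons.1 hy' with rfl | hy2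
      · have hnotG : (∀ k : Fin l, ((y' : Fin d), k).1 ∉ G) := by
          intro k
          exact fun h => (List.nodup_cons.1 hnd).1 h
        exact Pat_congr d l y' (l-1) (fun k => hu2 (y',k) (hnotG k)) hp1
      · exact hp2 y' hy2
    · intro i hi
      rw [List.foldl_append]
      have hi1 : i.1 ≠ y := fun h => hi (h ▸ List.mem_cons_self)
      have hi2 : i.1 ∉ G := fun h => hi (List.mem_cons_of_mem _ h)
      obtain ⟨o1, o2⟩ := hu2 i hi2
      obtain ⟨o3, o4⟩ := hu1 i hi1
      exact ⟨by rw [o1, o3], by rw [o2, o4]⟩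

def Gfull : List (Fin d) := (List.range (d-1)).map (fun y => (((y+1:ℕ)) : Fin d))

lemma Gfull_val {y : ℕ} (hy : y < d - 1) : ((((y+1:ℕ)) : Fin d)).val = y + 1 := by
  rw [Fin.val_natCast]
  exact Nat.mod_eq_of_lt (by omega)

lemma nodup_Gfull : (Gfull d).Nodup := by
  apply List.nodup_range.map_on
  intro x hx x' hx' h
  have := congrArg Fin.val h
  rw [Gfull_val d (List.mem_range.1 hx), Gfull_val d (List.mem_range.1 hx')] at this
  omega

lemma Gfull_ne0 : ∀ y ∈ Gfull d, y.val ≠ 0 := by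
  intro y hy
  obtain ⟨x, hx, rfl⟩ := List.mem_map.1 hy
  rw [Gfull_val d (List.mem_range.1 hx)]
  omega

lemma mem_Gfull (y : Fin d) (hy : y.val ≠ 0) : y ∈ Gfull d := by
  refine List.mem_map.2 ⟨y.val - 1, List.mem_range.2 ?_, ?_⟩
  · have := y.isLt; omega
  · have h1 : y.val - 1 + 1 = y.val := by have := y.isLt; omega
    rw [h1, Fin.cast_val_eq_self]

def gvA (i : GAg d l) : GAg d l := if i.1.val = 0 then i else (i.1, i.2 - 1)

def stA : TState (GAg d l) (GAg d l) :=
  List.foldl stepCycle ⟨GS d l, GD d l⟩ ((Gfull d).flatMap (rots d l))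

lemma stA_valid (hd2 : 2 ≤ d) :
    ValidExec ⟨GS d l, GD d l⟩ ((Gfull d).flatMap (rots d l)) :=
  (phaseA d l hd2 (Gfull d) (nodup_Gfull d) (Gfull_ne0 d) _
    (fun y hy => init_Pat d l hd2 y (Gfull_ne0 d y hy))).1

lemma stA_spec (hd2 : 2 ≤ d) (hl2 : 2 ≤ l) (i : GAg d l) :
    (stA d l).own i = {gvA d l i} ∧ (stA d l).dem i = {gnxt d l i} := by
  obtain ⟨-, hp, hu⟩ := phaseA d l hd2 (Gfull d) (nodup_Gfull d) (Gfull_ne0 d)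
    ⟨GS d l, GD d l⟩ (fun y hy => init_Pat d l hd2 y (Gfull_ne0 d y hy))
  by_cases h0 : i.1.val = 0
  · have hnm : i.1 ∉ Gfull d := fun h => (Gfull_ne0 d i.1 h) h0
    obtain ⟨o1, o2⟩ := hu i hnm
    rw [stA, o1, o2]
    constructor
    · show GS d l i = {gvA d l i}
      rw [GS, gvA, if_pos h0]
    · show GD d l i = {gnxt d l i}
      rw [GD, if_pos h0]
  · have hmem : i.1 ∈ Gfull d := mem_Gfull d i.1 h0
    have hpi := hp i.1 hmem i.2
    rw [← stA] at hpi
    rcases hpi with ⟨ho, hd'⟩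
    constructor
    · rw [show ((i.1, i.2) : GAg d l) = i from rfl] at ho
      rw [ho, gvA, if_neg h0]
      congr 2
      ext
      rw [Fin.val_add, Fin.val_natCast, Fin.sub_def, Fin.val_one',
        Nat.mod_eq_of_lt (show (1:ℕ) < l by omega),
        Nat.mod_eq_of_lt (show l - 1 < l by omega)]
      congr 1
      omega
    · rw [show ((i.1, i.2) : GAg d l) = i from rfl] at hd'
      rw [hd']
      rw [show l - 1 + 1 = l by omega, Finset.Ico_self, Finset.image_empty]
      rfl

end PhaseA2

section PhaseB

variable (d l : ℕ) [NeZero d] [NeZero l]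

lemma Lpos : 0 < Nat.lcm d l :=
  Nat.pos_of_ne_zero (Nat.lcm_ne_zero (NeZero.ne d) (NeZero.ne l))

def eB (s t : ℕ) : GAg d l := ((t : Fin d), ((s + t : ℕ) : Fin l))

def AB (s : ℕ) : List (GAg d l) := (List.range (Nat.lcm d l)).map (eB d l s)

def BC (s : ℕ) : List (GAg d l × GAg d l) := cyc (AB d l s) (gnxt d l)

lemma gnxt_inj : Function.Injective (gnxt d l) := by
  intro p q h
  have h1 : p.1 = q.1 := by
    have := congrArg Prod.fst h
    rw [gnxt_fst, gnxt_fst] at this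
    exact add_right_cancel this
  rw [gnxt, gnxt, h1] at h
  split_ifs at h with hc
  · have h2 := congrArg Prod.snd h
    exact Prod.ext h1 h2
  · have h2 := congrArg Prod.snd h
    exact Prod.ext h1 (add_right_cancel h2)

lemma eB_aux {s t t' : ℕ} (hle : t ≤ t') (ht' : t' - t < Nat.lcm d l)
    (h : eB d l s t = eB d l s t') : t = t' := by
  rw [eB, eB, Prod.mk.injEq] at h
  have h1 : t % d = t' % d := by
    have := congrArg Fin.val h.1
    rwa [Fin.val_natCast, Fin.val_natCast] at this
  have h2 : (s+t) % l = (s+t') % l := by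
    have := congrArg Fin.val h.2
    rwa [Fin.val_natCast, Fin.val_natCast] at this
  have hdd : d ∣ t' - t := (Nat.modEq_iff_dvd' hle).1 h1
  have h3 : t ≡ t' [MOD l] := Nat.ModEq.add_left_cancel' s h2
  have hll : l ∣ t' - t := (Nat.modEq_iff_dvd' hle).1 h3
  have h4 : Nat.lcm d l ∣ t' - t := Nat.lcm_dvd hdd hll
  rcases Nat.eq_zero_or_pos (t' - t) with h6 | h6
  · omega
  · have := Nat.le_of_dvd h6 h4
    omega

lemma eB_inj (s : ℕ) {t t' : ℕ} (ht : t < Nat.lcm d l) (ht' : t' < Nat.lcm d l)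
    (h : eB d l s t = eB d l s t') : t = t' := by
  rcases le_total t t' with hle | hle
  · exact eB_aux d l hle (by omega) h
  · exact (eB_aux d l hle (by omega) h.symm).symm

lemma nodup_AB (s : ℕ) : (AB d l s).Nodup := by
  apply List.nodup_range.map_on
  intro x hx x' hx' h
  exact eB_inj d l s (List.mem_range.1 hx) (List.mem_range.1 hx') h

lemma gnxt_eB (s : ℕ) {t : ℕ} (ht : t < Nat.lcm d l) :
    gnxt d l (eB d l s t) = gvA d l (eB d l s ((t+1) % Nat.lcm d l)) := by
  have hdL : d ∣ Nat.lcm d l := Nat.dvd_lcm_left d l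
  have hlL : l ∣ Nat.lcm d l := Nat.dvd_lcm_right d l
  have hdpos : 0 < d := Nat.pos_of_ne_zero (NeZero.ne d)
  obtain ⟨m, hm⟩ := hdL
  obtain ⟨m', hm'⟩ := hlL
  have haddmod : ∀ a : ℕ, (a + 1) % d = (a % d + 1) % d := by
    intro a
    conv_lhs => rw [Nat.add_mod]
    rcases Nat.lt_or_ge 1 d with h1 | h1
    · rw [Nat.mod_eq_of_lt h1]
    · have hd1 : d = 1 := by omega
      subst hd1
      simp
  rw [gnxt, eB]
  simp only [Fin.val_natCast]
  by_cases hc : t % d + 1 < d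
  · rw [if_pos hc]
    have ht1 : t + 1 < Nat.lcm d l := by
      by_contra hcon
      have he2 : t + 1 = Nat.lcm d l := by omega
      have hmm : (t+1) % d = t % d + 1 := by
        rw [haddmod, Nat.mod_eq_of_lt hc]
      rw [he2, hm, Nat.mul_mod_right] at hmm
      omega
    rw [Nat.mod_eq_of_lt ht1, eB, gvA]
    have hval : (((t+1 : ℕ)) : Fin d).val = t % d + 1 := by
      rw [Fin.val_natCast, haddmod, Nat.mod_eq_of_lt hc]
    rw [if_neg (by rw [hval]; omega)]
    congr 1
    · exact (Nat.cast_add_one t).symm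
    · show ((s+t : ℕ) : Fin l) = ((s+(t+1) : ℕ) : Fin l) - 1
      rw [show s+(t+1) = (s+t)+1 by ring, Nat.cast_add_one, add_sub_cancel_right]
  · rw [if_neg hc]
    have hrd : t % d + 1 = d := by have := Nat.mod_lt t hdpos; omega
    by_cases ht1 : t + 1 < Nat.lcm d l
    · rw [Nat.mod_eq_of_lt ht1, eB, gvA]
      have hval : (((t+1:ℕ)) : Fin d).val = 0 := by
        rw [Fin.val_natCast, haddmod, hrd, Nat.mod_self]
      rw [if_pos hval]
      congr 1
      · exact (Nat.cast_add_one t).symm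
      · show ((s+t : ℕ) : Fin l) + 1 = ((s+(t+1) : ℕ) : Fin l)
        rw [show s+(t+1) = (s+t)+1 by ring, Nat.cast_add_one]
    · have he2 : t + 1 = Nat.lcm d l := by omega
      rw [he2, Nat.mod_self, eB, gvA]
      rw [if_pos (by rw [Fin.val_natCast, Nat.zero_mod])]
      congr 1
      · have hcast : ((t+1 : ℕ) : Fin d) = ((0:ℕ) : Fin d) := by
          ext
          rw [Fin.val_natCast, Fin.val_natCast, he2, hm, Nat.mul_mod_right, Nat.zero_mod]
        rw [← hcast]
        exact (Nat.cast_add_one t).symm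
      · have hcast : ((s+t+1 : ℕ) : Fin l) = ((s+0 : ℕ) : Fin l) := by
          ext
          rw [Fin.val_natCast, Fin.val_natCast]
          have e : s + t + 1 = s + l * m' := by omega
          rw [e, Nat.add_mul_mod_self_left, Nat.add_zero]
        show ((s+t : ℕ) : Fin l) + 1 = ((s+0 : ℕ) : Fin l)
        rw [← hcast]
        exact (Nat.cast_add_one (s+t)).symm

lemma hrotB (s : ℕ) :
    (AB d l s).map (gnxt d l) = ((AB d l s).map (gvA d l)).rotate 1 :=
  rot1_range (Lpos d l) (eB d l s) _ _ (fun t ht => gnxt_eB d l s ht)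

lemma validCycle_BC (s : ℕ) (st : TState (GAg d l) (GAg d l))
    (hst : ∀ t, t < Nat.lcm d l → st.own (eB d l s t) = {gvA d l (eB d l s t)} ∧
      st.dem (eB d l s t) = {gnxt d l (eB d l s t)}) :
    ValidCycle st (BC d l s) := by
  refine ⟨?_, ?_, ?_, ?_, ?_⟩
  · have hlen : (BC d l s).length = Nat.lcm d l := by simp [BC, cyc, AB]
    intro h
    rw [h] at hlen
    simp at hlen
    have := Lpos d l
    omega
  · rw [BC, cyc_map_fst]; exact nodup_AB d l s
  · rw [BC, cyc_map_snd]; exact (nodup_AB d l s).map (gnxt_inj d l)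
  · rintro ⟨i, j⟩ hp
    obtain ⟨hi, rfl⟩ := mem_cyc.1 hp
    obtain ⟨t, ht, rfl⟩ := List.mem_map.1 hi
    rw [(hst t (List.mem_range.1 ht)).2]
    exact Finset.mem_singleton_self _
  · rintro ⟨i, j⟩ hp
    rw [BC, gives_cyc (hrotB d l s)] at hp
    obtain ⟨hi, rfl⟩ := mem_cyc.1 hp
    obtain ⟨t, ht, rfl⟩ := List.mem_map.1 hi
    rw [(hst t (List.mem_range.1 ht)).1]
    exact Finset.mem_singleton_self _

lemma eB_cross {s1 s2 : ℕ} (h1 : s1 < Nat.gcd d l) (h2 : s2 < Nat.gcd d l)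
    (hne : s1 ≠ s2) (t t' : ℕ) : eB d l s1 t ≠ eB d l s2 t' := by
  intro h
  rw [eB, eB, Prod.mk.injEq] at h
  have g1 : t ≡ t' [MOD d] := by
    have := congrArg Fin.val h.1
    rwa [Fin.val_natCast, Fin.val_natCast] at this
  have g2 : s1 + t ≡ s2 + t' [MOD l] := by
    have := congrArg Fin.val h.2
    rwa [Fin.val_natCast, Fin.val_natCast] at this
  have g1' : t ≡ t' [MOD Nat.gcd d l] := g1.of_dvd (Nat.gcd_dvd_left d l)
  have g2' : s1 + t ≡ s2 + t' [MOD Nat.gcd d l] := g2.of_dvd (Nat.gcd_dvd_right d l)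
  have g3 : s1 ≡ s2 [MOD Nat.gcd d l] := Nat.ModEq.add_right_cancel g1' g2'
  rw [Nat.ModEq, Nat.mod_eq_of_lt h1, Nat.mod_eq_of_lt h2] at g3
  exact hne g3

lemma phaseB : ∀ (S : List ℕ), S.Nodup → (∀ x ∈ S, x < Nat.gcd d l) →
    ∀ st : TState (GAg d l) (GAg d l), (∀ x ∈ S, ∀ t, t < Nat.lcm d l →
      st.own (eB d l x t) = {gvA d l (eB d l x t)} ∧
      st.dem (eB d l x t) = {gnxt d l (eB d l x t)}) →
    ValidExec st (S.map (BC d l)) := by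
  intro S
  induction S with
  | nil => intro _ _ st _; trivial
  | cons x S ih =>
    intro hnd hb st hst
    rw [List.map_cons]
    refine ⟨validCycle_BC d l x st (hst x (List.mem_cons_self)), ?_⟩
    apply ih (List.nodup_cons.1 hnd).2 (fun x' h => hb x' (List.mem_cons_of_mem _ h))
    intro x' hx' t ht
    have hx'on : eB d l x' t ∉ AB d l x := by
      intro hmem
      obtain ⟨t', ht', heq⟩ := List.mem_map.1 hmem
      have hxx : x ≠ x' := fun h => (List.nodup_cons.1 hnd).1 (h ▸ hx')
      exact eB_cross d l (hb x (List.mem_cons_self))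
        (hb x' (List.mem_cons_of_mem _ hx')) hxx t' t heq
    rw [BC, stepCycle_own_not_mem (hrotB d l x) hx'on, stepCycle_dem_not_mem hx'on]
    exact hst x' (List.mem_cons_of_mem _ hx') t ht

end PhaseB

section Assemble

variable (d l : ℕ) [NeZero d] [NeZero l]

lemma exchanges_append (r1 r2 : List (List (GAg d l × GAg d l))) :
    exchanges (r1 ++ r2) = exchanges r1 + exchanges r2 := by
  simp [exchanges]

lemma sum_const_range (n c : ℕ) : ((List.range n).map (fun _ => c)).sum = n * c := by
  induction n with
  | zero => simp
  | succ m ih =>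
    rw [List.range_succ, List.map_append, List.sum_append, ih, Nat.succ_mul]
    simp

lemma exchanges_flatMap_const (c : ℕ) (G : List (Fin d))
    (h : ∀ y, exchanges (rots d l y) = c) :
    exchanges (G.flatMap (rots d l)) = G.length * c := by
  induction G with
  | nil => simp [exchanges]
  | cons y G ih =>
    rw [List.flatMap_cons, exchanges_append, h y, ih, List.length_cons, Nat.succ_mul]
    omega

lemma exchanges_rots (y : Fin d) : exchanges (rots d l y) = (l-1) * l := by
  rw [rots, exchanges, List.map_map]
  have h : (List.range (l-1)).map (List.length ∘ fun t => RC d l y (t+1))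
      = (List.range (l-1)).map (fun _ => l) := by
    apply List.map_congr_left
    intro t _
    simp [Function.comp, RC, cyc, AR]
  rw [h, sum_const_range]

lemma exchanges_B : exchanges ((List.range (Nat.gcd d l)).map (BC d l))
    = Nat.gcd d l * Nat.lcm d l := by
  rw [exchanges, List.map_map]
  have h : (List.range (Nat.gcd d l)).map (List.length ∘ BC d l)
      = (List.range (Nat.gcd d l)).map (fun _ => Nat.lcm d l) := by
    apply List.map_congr_left
    intro t _
    simp [Function.comp, BC, cyc, AB]
  rw [h, sum_const_range]

lemma opt_exec_final (hd : 2 ≤ d) (hl : 2 ≤ l) :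
    ∃ r : List (List (GAg d l × GAg d l)),
      ValidExec ⟨GS d l, GD d l⟩ r ∧ exchanges r = l + (d - 1) * l * l := by
  refine ⟨(Gfull d).flatMap (rots d l) ++ (List.range (Nat.gcd d l)).map (BC d l), ?_, ?_⟩
  · apply validExec_append.2
    refine ⟨stA_valid d l hd, ?_⟩
    have hfold : List.foldl stepCycle ⟨GS d l, GD d l⟩ ((Gfull d).flatMap (rots d l))
        = stA d l := rfl
    rw [hfold]
    apply phaseB d l (List.range (Nat.gcd d l)) List.nodup_range
      (fun x h => List.mem_range.1 h)
    intro x _ t _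
    exact stA_spec d l hd hl _
  · rw [exchanges_append, exchanges_B,
      exchanges_flatMap_const d l ((l-1)*l) (Gfull d) (exchanges_rots d l),
      Nat.gcd_mul_lcm]
    have hG : (Gfull d).length = d - 1 := by simp [Gfull]
    rw [hG]
    obtain ⟨a, rfl⟩ : ∃ a, d = a + 2 := ⟨d - 2, by omega⟩
    obtain ⟨b, rfl⟩ : ∃ b, l = b + 2 := ⟨l - 2, by omega⟩
    show (a+2-1) * ((b+2-1)*(b+2)) + (a+2)*(b+2) = (b+2) + (a+2-1)*(b+2)*(b+2)
    have e1 : a+2-1 = a+1 := rfl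
    have e2 : b+2-1 = b+1 := rfl
    rw [e1, e2]
    ring

end Assemble

end St16

/-- In `G_d` the giant cycle `C_all` is a valid optimal static
execution with `d·l` exchanges, after which no further cycle exists (so the greedy
algorithm performs exactly `d·l` exchanges), while some execution performs
`l + (d−1)·l²` exchanges; the resulting ratio `(1+(d−1)l)/d` tends to `l` as
`d → ∞`. -/
theorem stmt16 (d l : ℕ) [NeZero d] [NeZero l] (hd : 2 ≤ d) (hl : 2 ≤ l) :
    ValidExec ⟨GS d l, GD d l⟩ [CAll d l] ∧
    StaticExec [CAll d l] ∧
    exchanges [CAll d l] = d * l ∧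
    (∀ r : List (List (GAg d l × GAg d l)),
      ValidExec ⟨GS d l, GD d l⟩ r → StaticExec r → exchanges r ≤ d * l) ∧
    (∀ c : List (GAg d l × GAg d l),
      ¬ ValidCycle (stepCycle ⟨GS d l, GD d l⟩ (CAll d l)) c) ∧
    (∃ r : List (List (GAg d l × GAg d l)),
      ValidExec ⟨GS d l, GD d l⟩ r ∧ exchanges r = l + (d - 1) * l * l) ∧
    Filter.Tendsto (fun m : ℕ => (1 + ((m : ℝ) - 1) * l) / m)
      Filter.atTop (nhds l) := by
  refine ⟨⟨St16.validCycle_CAll d l, trivial⟩, St16.static_CAll d l, St16.exch_CAll d l,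
    fun r _ hr => St16.static_bound d l r hr, fun c => St16.no_cycle_after d l c,
    St16.opt_exec_final d l hd hl, ?_⟩
  exact St16.limit_part (l := l)
end

section
/- Given the multigraph union of a perfect matching M_X (of H with special vertices included) and a perfect matching M_{X−j} (of H minus the two copies of edge (i,j)), and the alternating path P from ((i,j),0) to ((i,j),1), the two edge sets M'_X = (P ∩ M_X) ∪ ((E∖P) ∩ M_{X−j}) and M'_{X−j} = (P ∩ M_{X−j}) ∪ ((E∖P) ∩ M_X) are valid matchings of the respective graphs (M'_X perfect on all of H, M'_{X−j} perfect on H minus the two copies of (i,j)), and w(M'_X) + w(M'_{X−j}) = w(M_X) + w(M_{X−j}) for any edge weighting w. -/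
open scoped Classical

/-- The vertex set of the alternating path `P` that starts at `(j, false)` and takes
edges of the matchings `m₁` and `m₂` alternately. -/
def altPathSet {E : Type} (m₁ m₂ : E × Bool → E × Bool) (j : E) : Set (E × Bool) :=
  {v | ∃ k : ℕ, (m₂ ∘ m₁)^[k] (j, false) = v ∨ m₁ ((m₂ ∘ m₁)^[k] (j, false)) = v}

lemma altPath_closed_m₁ {E : Type} (m₁ m₂ : E × Bool → E × Bool) (j : E)
    (h₁inv : Function.Involutive m₁) :
    ∀ v ∈ altPathSet m₁ m₂ j, m₁ v ∈ altPathSet m₁ m₂ j := by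
  rintro v ⟨k, hk | hk⟩
  · exact ⟨k, Or.inr (by rw [hk])⟩
  · exact ⟨k, Or.inl (by rw [← hk, h₁inv])⟩

lemma altPath_closed_m₂ {E : Type} (m₁ m₂ : E × Bool → E × Bool) (j : E)
    (h₂inv : Function.Involutive m₂)
    (h₂fix : ∀ v, m₂ v = v ↔ v = (j, false) ∨ v = (j, true)) :
    ∀ v ∈ altPathSet m₁ m₂ j, m₂ v ∈ altPathSet m₁ m₂ j := by
  rintro v ⟨k, hk | hk⟩
  · subst hk
    cases k with
    | zero =>
        refine ⟨0, Or.inl ?_⟩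
        simp [(h₂fix (j, false)).2 (Or.inl rfl)]
    | succ k =>
        refine ⟨k, Or.inr ?_⟩
        rw [Function.iterate_succ_apply', Function.comp_apply, h₂inv]
  · subst hk
    exact ⟨k + 1, Or.inl (by rw [Function.iterate_succ_apply']; rfl)⟩

lemma altPath_jt_mem {E : Type} [Fintype E] (m₁ m₂ : E × Bool → E × Bool) (j : E)
    (h₁inv : Function.Involutive m₁)
    (h₁side : ∀ v, (m₁ v).2 ≠ v.2)
    (h₂inv : Function.Involutive m₂)
    (h₂fix : ∀ v, m₂ v = v ↔ v = (j, false) ∨ v = (j, true))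
    (h₂side : ∀ v, m₂ v ≠ v → (m₂ v).2 ≠ v.2) :
    (j, true) ∈ altPathSet m₁ m₂ j := by
  by_contra htrue
  -- all "even" vertices of the path lie on side `false`
  have hside : ∀ k : ℕ, ((m₂ ∘ m₁)^[k] (j, false)).2 = false := by
    intro k
    induction k with
    | zero => rfl
    | succ k ih =>
        rw [Function.iterate_succ_apply']
        set a := (m₂ ∘ m₁)^[k] (j, false) with ha
        have hb2 : (m₁ a).2 = true := by
          have := h₁side a; rw [ih] at this; simpa using this
        have hne : m₂ (m₁ a) ≠ m₁ a := by
          intro h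
          rcases (h₂fix (m₁ a)).1 h with h' | h'
          · rw [h'] at hb2; simp at hb2
          · exact htrue ⟨k, Or.inr h'⟩
        have := h₂side (m₁ a) hne
        rw [hb2] at this
        simpa using this
  -- periodicity of the orbit
  have hinj : Function.Injective (m₂ ∘ m₁) :=
    h₂inv.injective.comp h₁inv.injective
  obtain ⟨x, y, hxy, hfeq⟩ :=
    Finite.exists_ne_map_eq_of_infinite (fun k : ℕ => (m₂ ∘ m₁)^[k] (j, false))
  wlog hlt : x < y generalizing x y
  · exact this y x hxy.symm hfeq.symm (by omega)
  have hper : (m₂ ∘ m₁)^[y - x] (j, false) = (j, false) := by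
    have : (m₂ ∘ m₁)^[x] ((m₂ ∘ m₁)^[y - x] (j, false))
        = (m₂ ∘ m₁)^[x] (j, false) := by
      rw [← Function.iterate_add_apply]
      have : x + (y - x) = y := by omega
      rw [this]
      exact hfeq.symm
    exact hinj.iterate x this
  obtain ⟨q, hq⟩ : ∃ q, y - x = q + 1 := ⟨y - x - 1, by omega⟩
  rw [hq] at hper
  have h1 : m₂ ((m₂ ∘ m₁)^[q + 1] (j, false)) = m₁ ((m₂ ∘ m₁)^[q] (j, false)) := by
    rw [Function.iterate_succ_apply']
    exact h₂inv _
  rw [hper, (h₂fix (j, false)).2 (Or.inl rfl)] at h1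
  have hs := h₁side ((m₂ ∘ m₁)^[q] (j, false))
  rw [hside q, ← h1] at hs
  simp at hs

/-- `H` is a bipartite graph on `E × {0,1}`; `m₁` (= `M_X`) is a
perfect matching of the full vertex set and `m₂` (= `M_{X−j}`) is a perfect matching
of the vertex set minus the two copies of the edge `j` (encoded as involutions, with
fixed points exactly the unmatched vertices). Swapping the two matchings along the
alternating path `P` from `(j,0)` to `(j,1)` yields valid matchings `M'_X` (perfect
on the full graph) and `M'_{X−j}` (perfect off the two copies of `j`), using only
edges of the union, and with total weight preserved for every symmetric edge
weighting. -/
theorem stmt18 {E : Type} [Fintype E] [DecidableEq E] (j : E)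
    (m₁ m₂ : E × Bool → E × Bool)
    (h₁inv : Function.Involutive m₁) (h₁nf : ∀ v, m₁ v ≠ v)
    (h₁side : ∀ v, (m₁ v).2 ≠ v.2)
    (h₂inv : Function.Involutive m₂)
    (h₂fix : ∀ v, m₂ v = v ↔ v = (j, false) ∨ v = (j, true))
    (h₂side : ∀ v, m₂ v ≠ v → (m₂ v).2 ≠ v.2) :
    let P := altPathSet m₁ m₂ j
    let MX' : E × Bool → E × Bool := fun v => if v ∈ P then m₁ v else m₂ v
    let Mj' : E × Bool → E × Bool := fun v => if v ∈ P then m₂ v else m₁ v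
    (∀ v, MX' v = m₁ v ∨ MX' v = m₂ v) ∧
    (∀ v, Mj' v = m₁ v ∨ Mj' v = m₂ v) ∧
    Function.Involutive MX' ∧ (∀ v, MX' v ≠ v) ∧
    Function.Involutive Mj' ∧
    (∀ v, Mj' v = v ↔ v = (j, false) ∨ v = (j, true)) ∧
    ∀ w : E × Bool → E × Bool → ℝ, (∀ u v, w u v = w v u) →
      (∑ v, w v (MX' v)) + (∑ v, w v (Mj' v))
        = (∑ v, w v (m₁ v)) + (∑ v, w v (m₂ v)) := by
  intro P MX' Mj'
  have hjf : (j, false) ∈ P := ⟨0, Or.inl rfl⟩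
  have hjt : (j, true) ∈ P :=
    altPath_jt_mem m₁ m₂ j h₁inv h₁side h₂inv h₂fix h₂side
  have hcl1 : ∀ v ∈ P, m₁ v ∈ P := altPath_closed_m₁ m₁ m₂ j h₁inv
  have hcl2 : ∀ v ∈ P, m₂ v ∈ P := altPath_closed_m₂ m₁ m₂ j h₂inv h₂fix
  have hcl1' : ∀ v, v ∉ P → m₁ v ∉ P := fun v hv h =>
    hv (by rw [← h₁inv v]; exact hcl1 _ h)
  have hcl2' : ∀ v, v ∉ P → m₂ v ∉ P := fun v hv h =>
    hv (by rw [← h₂inv v]; exact hcl2 _ h)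
  refine ⟨?_, ?_, ?_, ?_, ?_, ?_, ?_⟩
  · intro v
    by_cases hv : v ∈ P
    · exact Or.inl (if_pos hv)
    · exact Or.inr (if_neg hv)
  · intro v
    by_cases hv : v ∈ P
    · exact Or.inr (if_pos hv)
    · exact Or.inl (if_neg hv)
  · intro v
    by_cases hv : v ∈ P
    · show MX' (MX' v) = v
      simp only [MX', if_pos hv, if_pos (hcl1 v hv)]
      exact h₁inv v
    · show MX' (MX' v) = v
      simp only [MX', if_neg hv, if_neg (hcl2' v hv)]
      exact h₂inv v
  · intro v
    by_cases hv : v ∈ P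
    · simpa only [MX', if_pos hv] using h₁nf v
    · simp only [MX', if_neg hv]
      intro h
      rcases (h₂fix v).1 h with h' | h' <;> subst h'
      · exact hv hjf
      · exact hv hjt
  · intro v
    by_cases hv : v ∈ P
    · show Mj' (Mj' v) = v
      simp only [Mj', if_pos hv, if_pos (hcl2 v hv)]
      exact h₂inv v
    · show Mj' (Mj' v) = v
      simp only [Mj', if_neg hv, if_neg (hcl1' v hv)]
      exact h₁inv v
  · intro v
    by_cases hv : v ∈ P
    · simpa only [Mj', if_pos hv] using h₂fix v
    · simp only [Mj', if_neg hv]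
      constructor
      · intro h; exact absurd h (h₁nf v)
      · rintro (h | h) <;> subst h
        · exact absurd hjf hv
        · exact absurd hjt hv
  · intro w _
    rw [← Finset.sum_add_distrib, ← Finset.sum_add_distrib]
    refine Finset.sum_congr rfl fun v _ => ?_
    simp only [MX', Mj']
    by_cases hv : v ∈ P
    · rw [if_pos hv, if_pos hv]
    · rw [if_neg hv, if_neg hv]; ring
end
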